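/- arXiv:2106.09688 — 3 statements merged into one kernel-verified Lean document; each statement's English description precedes it below -/
import Mathlib

section
/- Fix an integer k ≥ 3, a k-vertex graph F and r ∈ ℕ such that either (1) F = K_k and r = k−1, or (2) F is a tree on k vertices or F = C_k, and r = 2. Then for any μ > 0 there exists α > 0 such that the following holds for all sufficiently large n ∈ ℕ: if G is an n-vertex graph with minimum degree δ(G) ≥ μn and α_r(G) ≤ αn, then, with β := μ²/8, every vertex of G is (F, βn, 1)-reachable to at least (μ/4)n other vertices. -/
open Finset

namespace RTT

variable {k n : ℕ}

/-- `S` spans a copy of the `k`-vertex graph `F` in `G`: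
there is an injective graph homomorphism from `F` to `G` with image exactly `S`. -/
def SpansCopy (F : SimpleGraph (Fin k)) (G : SimpleGraph (Fin n))
    (S : Finset (Fin n)) : Prop :=
  ∃ f : Fin k → Fin n, Function.Injective f ∧
    (∀ a b, F.Adj a b → G.Adj (f a) (f b)) ∧ Finset.image f Finset.univ = S

/-- `T` is an `F`-tiling in `G`: a collection of pairwise vertex-disjoint vertex sets,
each spanning a copy of `F`. -/
def IsTiling (F : SimpleGraph (Fin k)) (G : SimpleGraph (Fin n))
    (T : Finset (Finset (Fin n))) : Prop :=
  (∀ S ∈ T, SpansCopy F G S) ∧ ∀ S ∈ T, ∀ S' ∈ T, S ≠ S' → Disjoint S S'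

/-- The induced subgraph of `G` on the vertex set `A` has a perfect `F`-tiling. -/
def PerfTilingOn (F : SimpleGraph (Fin k)) (G : SimpleGraph (Fin n))
    (A : Finset (Fin n)) : Prop :=
  ∃ T : Finset (Finset (Fin n)), IsTiling F G T ∧ T.biUnion id = A

/-- The minimum degree of `G` is at least `x`. -/
def MinDegGE (G : SimpleGraph (Fin n)) (x : ℝ) : Prop :=
  ∀ v : Fin n, x ≤ ((G.neighborSet v).ncard : ℝ)

/-- The `r`-independence number of `G` is at most `x`: every vertex set whose induced
subgraph contains no copy of `K_r` has size at most `x`. -/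
def IndepBound (G : SimpleGraph (Fin n)) (r : ℕ) (x : ℝ) : Prop :=
  ∀ S : Finset (Fin n), (∀ T ⊆ S, ¬ G.IsNClique r T) → (S.card : ℝ) ≤ x

/-- `α*(G) ≤ x`: every bipartite hole of `G` has size at most `x`. -/
def HoleBound (G : SimpleGraph (Fin n)) (x : ℝ) : Prop :=
  ∀ (s : ℕ) (U₁ U₂ : Finset (Fin n)), Disjoint U₁ U₂ → U₁.card = s → U₂.card = s →
    (∀ u ∈ U₁, ∀ v ∈ U₂, ¬ G.Adj u v) → (s : ℝ) ≤ x

/-- `A` is a `ξ`-absorbing set with respect to `V'` (for the `k`-vertex graph `F`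
in the `n`-vertex graph `G`). -/
def IsAbsorbingSet (F : SimpleGraph (Fin k)) (G : SimpleGraph (Fin n)) (ξ : ℝ)
    (V' A : Finset (Fin n)) : Prop :=
  ∀ U : Finset (Fin n), U ⊆ V' \ A → (U.card : ℝ) ≤ ξ * n →
    k ∣ (A ∪ U).card → PerfTilingOn F G (A ∪ U)

/-- `A` is an `(F,t)`-absorber for the `k`-set `S`. -/
def IsAbsorber (F : SimpleGraph (Fin k)) (G : SimpleGraph (Fin n)) (t : ℕ)
    (S A : Finset (Fin n)) : Prop :=
  Disjoint A S ∧ A.card ≤ k ^ 2 * t ∧ PerfTilingOn F G A ∧ PerfTilingOn F G (A ∪ S)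

/-- `S` has a family of at least `x` pairwise vertex-disjoint `(F,t)`-absorbers in `G`. -/
def HasManyAbsorbers (F : SimpleGraph (Fin k)) (G : SimpleGraph (Fin n)) (t : ℕ)
    (S : Finset (Fin n)) (x : ℝ) : Prop :=
  ∃ 𝒜 : Finset (Finset (Fin n)), x ≤ (𝒜.card : ℝ) ∧
    (∀ A ∈ 𝒜, IsAbsorber F G t S A) ∧
    ∀ A ∈ 𝒜, ∀ A' ∈ 𝒜, A ≠ A' → Disjoint A A'

/-- `𝒮` is an `F`-fan at `v` in `U`: a collection of pairwise disjoint `(k-1)`-sets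
`S ⊆ U \ {v}` such that `{v} ∪ S` spans a copy of `F`; its size is `𝒮.card`. -/
def IsFan (F : SimpleGraph (Fin k)) (G : SimpleGraph (Fin n)) (v : Fin n)
    (U : Finset (Fin n)) (𝒮 : Finset (Finset (Fin n))) : Prop :=
  (∀ S ∈ 𝒮, S ⊆ U.erase v ∧ S.card = k - 1 ∧ SpansCopy F G (insert v S)) ∧
    ∀ S ∈ 𝒮, ∀ S' ∈ 𝒮, S ≠ S' → Disjoint S S'

/-- `u` and `v` are `(F, m, t)`-reachable in `G`. -/
def FReachable (F : SimpleGraph (Fin k)) (G : SimpleGraph (Fin n)) (m : ℝ) (t : ℕ)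
    (u v : Fin n) : Prop :=
  ∀ W : Finset (Fin n), (W.card : ℝ) ≤ m →
    ∃ S : Finset (Fin n), Disjoint S W ∧ u ∉ S ∧ v ∉ S ∧ S.card ≤ k * t - 1 ∧
      PerfTilingOn F G (insert u S) ∧ PerfTilingOn F G (insert v S)

/-- `U` is `(F, m, t)`-closed in `G`. -/
def FClosed (F : SimpleGraph (Fin k)) (G : SimpleGraph (Fin n)) (m : ℝ) (t : ℕ)
    (U : Finset (Fin n)) : Prop :=
  ∀ u ∈ U, ∀ v ∈ U, u ≠ v → FReachable F G m t u v

/-- `P` is a partition of the vertex set of an `n`-vertex graph into `C` parts. -/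
def IsPartition {C : ℕ} (P : Fin C → Finset (Fin n)) : Prop :=
  (∀ i j, i ≠ j → Disjoint (P i) (P j)) ∧ Finset.univ.biUnion P = Finset.univ

/-- The `k`-vector `v` is `(F, β)`-robust with respect to the partition `P`:
it has coordinate sum `k`, and avoiding any set `W` of at most `βn` vertices there is
a copy of `F` whose vertex set has index vector `v`. -/
def RobustVec (F : SimpleGraph (Fin k)) (G : SimpleGraph (Fin n)) {C : ℕ}
    (P : Fin C → Finset (Fin n)) (β : ℝ) (v : Fin C → ℕ) : Prop :=
  (∑ i, v i) = k ∧
    ∀ W : Finset (Fin n), (W.card : ℝ) ≤ β * n →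
      ∃ S : Finset (Fin n), Disjoint S W ∧ SpansCopy F G S ∧ ∀ i, (S ∩ P i).card = v i

end RTT

section RTTAuxSection
open scoped Classical
namespace RTTAux

open RTT
open scoped Classical

variable {k n : ℕ}

noncomputable def nbr (G : SimpleGraph (Fin n)) (x : Fin n) : Finset (Fin n) :=
  Finset.univ.filter (fun y => G.Adj x y)

lemma mem_nbr {G : SimpleGraph (Fin n)} {x y : Fin n} : y ∈ nbr G x ↔ G.Adj x y := by
  simp [nbr]

lemma ncard_eq_nbr_card (G : SimpleGraph (Fin n)) (x : Fin n) :
    (G.neighborSet x).ncard = (nbr G x).card := by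
  rw [Set.ncard_eq_toFinset_card']
  congr 1
  ext y
  simp [nbr, SimpleGraph.mem_neighborSet]

lemma perf_single {F : SimpleGraph (Fin k)} {G : SimpleGraph (Fin n)} {T : Finset (Fin n)}
    (h : SpansCopy F G T) : PerfTilingOn F G T := by
  refine ⟨{T}, ⟨?_, ?_⟩, ?_⟩ <;> simp [h]

/-- every element of `L` has at most one `F`-neighbor earlier in the list. -/
def Good (F : SimpleGraph (Fin k)) (L : List (Fin k)) : Prop :=
  ∀ (L₁ : List (Fin k)) (x : Fin k) (L₂ : List (Fin k)), L = L₁ ++ x :: L₂ →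
    ∀ y ∈ L₁, ∀ z ∈ L₁, F.Adj x y → F.Adj x z → y = z

lemma Good.append_singleton {F : SimpleGraph (Fin k)} {L : List (Fin k)} {x : Fin k}
    (h : Good F (L ++ [x])) : Good F L := by
  intro L₁ c L₂ hsplit y hy z hz hadjy hadjz
  exact h L₁ c (L₂ ++ [x]) (by rw [hsplit]; simp) y hy z hz hadjy hadjz

lemma greedy_embed (G : SimpleGraph (Fin n)) (F : SimpleGraph (Fin k))
    (C A : Finset (Fin n)) (hCA : Disjoint C A) (hC : C.Nonempty) :
    ∀ (L : List (Fin k)), L.Nodup → Good F L →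
    (∀ x : Fin n, A.card + L.length ≤ (nbr G x).card) →
    A.card + L.length ≤ n →
    ∃ g : Fin k → Fin n,
      (∀ x ∈ L, ∀ y ∈ L, g x = g y → x = y) ∧
      (∀ x ∈ L, g x ∉ A) ∧
      (∀ h : L ≠ [], g (L.head h) ∈ C) ∧
      (∀ x ∈ L, ∀ y ∈ L, F.Adj x y → G.Adj (g x) (g y)) := by
  intro L
  induction L using List.reverseRecOn with
  | nil =>
    intro _ _ _ _
    obtain ⟨c, hc⟩ := hC
    exact ⟨fun _ => c, by simp, by simp, by simp, by simp⟩
  | append_singleton M x IH =>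
    intro hnd hgood hdeg hn
    have hndM : M.Nodup ∧ x ∉ M := by
      constructor
      · exact hnd.sublist (by simp)
      · intro hx
        have := List.disjoint_of_nodup_append hnd
        exact this hx (by simp)
    obtain ⟨g, hg1, hg2, hg3, hg4⟩ := IH hndM.1 hgood.append_singleton
      (fun y => le_trans (by simp) (hdeg y)) (by simp at hn ⊢; omega)
    -- the set of already-used target vertices
    set U : Finset (Fin n) := A ∪ (M.map g).toFinset with hU
    have hUcard : U.card ≤ A.card + M.length := by
      refine le_trans (Finset.card_union_le _ _) ?_
      gcongr
      exact le_trans (List.toFinset_card_le _) (by simp)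
    -- choose the new vertex w
    have key : ∃ w : Fin n, w ∉ A ∧ w ∉ (M.map g).toFinset ∧ (M = [] → w ∈ C) ∧
        (∀ z ∈ M, F.Adj x z → G.Adj (g z) w) := by
      by_cases hM : M = []
      · obtain ⟨c, hc⟩ := hC
        exact ⟨c, Finset.disjoint_left.mp hCA hc, by simp [hM], fun _ => hc, by simp [hM]⟩
      · by_cases hE : ∀ z ∈ M, ¬ F.Adj x z
        · -- no earlier neighbor: choose any fresh vertex
          have hcard : (Finset.univ \ U).card > 0 := by
            have := Finset.card_sdiff_add_card_eq_card (Finset.subset_univ U)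
            simp at hn
            have hn' : U.card < n := by omega
            simp only [Finset.card_univ, Fintype.card_fin] at this
            omega
          obtain ⟨w, hw⟩ := Finset.card_pos.mp hcard
          simp only [Finset.mem_sdiff, hU, Finset.mem_union, not_or] at hw
          exact ⟨w, hw.2.1, hw.2.2, fun h => absurd h hM, fun z hz hadj => absurd hadj (hE z hz)⟩
        · push_neg at hE
          obtain ⟨y₀, hy₀M, hy₀adj⟩ := hE
          have huniq : ∀ z ∈ M, F.Adj x z → z = y₀ := by
            intro z hz hadj
            exact hgood M x [] rfl z hz y₀ hy₀M hadj hy₀adj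
          have hcard : ((nbr G (g y₀)) \ U).card > 0 := by
            have h1 := Finset.card_le_card_sdiff_add_card (s := nbr G (g y₀)) (t := U)
            have h2 := hdeg (g y₀)
            simp at h2
            omega
          obtain ⟨w, hw⟩ := Finset.card_pos.mp hcard
          simp only [Finset.mem_sdiff, hU, Finset.mem_union, not_or, mem_nbr] at hw
          refine ⟨w, hw.2.1, hw.2.2, fun h => absurd hy₀M (by simp [h]), ?_⟩
          intro z hz hadj
          rw [huniq z hz hadj]
          exact hw.1
    obtain ⟨w, hwA, hwM, hwC, hwadj⟩ := key
    refine ⟨Function.update g x w, ?_, ?_, ?_, ?_⟩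
    · intro a ha b hb hab
      simp only [List.mem_append, List.mem_singleton] at ha hb
      rcases ha with ha | ha <;> rcases hb with hb | hb
      · have hax : a ≠ x := fun h => hndM.2 (h ▸ ha)
        have hbx : b ≠ x := fun h => hndM.2 (h ▸ hb)
        rw [Function.update_of_ne hax, Function.update_of_ne hbx] at hab
        exact hg1 a ha b hb hab
      · have hax : a ≠ x := fun h => hndM.2 (h ▸ ha)
        rw [hb, Function.update_of_ne hax, Function.update_self] at hab
        exact absurd (by rw [← hab]; simp; exact ⟨a, ha, rfl⟩) hwM
      · have hbx : b ≠ x := fun h => hndM.2 (h ▸ hb)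
        rw [ha, Function.update_of_ne hbx, Function.update_self] at hab
        exact absurd (by rw [hab]; simp; exact ⟨b, hb, rfl⟩) hwM
      · rw [ha, hb]
    · intro a ha
      simp only [List.mem_append, List.mem_singleton] at ha
      rcases ha with ha | ha
      · have hax : a ≠ x := fun h => hndM.2 (h ▸ ha)
        rw [Function.update_of_ne hax]
        exact hg2 a ha
      · rw [ha, Function.update_self]; exact hwA
    · intro h
      by_cases hM : M = []
      · subst hM
        simp only [List.nil_append, List.head_cons, Function.update_self]
        exact hwC rfl
      · rw [List.head_append_of_ne_nil hM]
        have hmem : M.head hM ∈ M := List.head_mem hM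
        rw [Function.update_of_ne (fun hh => hndM.2 (by rw [← hh]; exact hmem))]
        exact hg3 hM
    · intro a ha b hb hadj
      simp only [List.mem_append, List.mem_singleton] at ha hb
      rcases ha with ha | ha <;> rcases hb with hb | hb
      · have hax : a ≠ x := fun h => hndM.2 (h ▸ ha)
        have hbx : b ≠ x := fun h => hndM.2 (h ▸ hb)
        rw [Function.update_of_ne hax, Function.update_of_ne hbx]
        exact hg4 a ha b hb hadj
      · have hax : a ≠ x := fun h => hndM.2 (h ▸ ha)
        rw [hb, Function.update_of_ne hax, Function.update_self]
        exact hwadj a ha (hb ▸ hadj).symm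
      · have hbx : b ≠ x := fun h => hndM.2 (h ▸ hb)
        rw [ha, Function.update_of_ne hbx, Function.update_self]
        exact (hwadj b hb (ha ▸ hadj)).symm
      · rw [ha, hb] at hadj; exact absurd hadj (F.loopless.irrefl x)

end RTTAux

section Aux2
open SimpleGraph
variable {k n : ℕ}
namespace RTTAux

lemma append_singleton_split {α : Type*} {l L₁ L₂ : List α} {x c : α}
    (h : l ++ [x] = L₁ ++ c :: L₂) :
    (L₁ = l ∧ c = x ∧ L₂ = []) ∨ ∃ L₂', l = L₁ ++ c :: L₂' ∧ L₂ = L₂' ++ [x] := by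
  rcases List.eq_nil_or_concat L₂ with h2 | ⟨M, y, h2⟩
  · subst h2
    obtain ⟨h3, h4⟩ := List.append_inj' h rfl
    left
    refine ⟨h3.symm, ?_, rfl⟩
    simpa using h4.symm
  · subst h2
    right
    have h' : l ++ [x] = (L₁ ++ c :: M) ++ [y] := by simpa using h
    obtain ⟨h3, h4⟩ := List.append_inj' h' rfl
    have hxy : x = y := by simpa using h4
    exact ⟨M, by simpa using h3, by rw [hxy]; exact List.concat_eq_append⟩

lemma exists_crossing {F : SimpleGraph (Fin k)} {L : List (Fin k)} :
    ∀ {a b : Fin k} (_w : F.Walk a b), a ∈ L → b ∉ L → ∃ y ∈ L, ∃ x, x ∉ L ∧ F.Adj y x := by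
  intro a b w
  induction w with
  | nil => intro h1 h2; exact absurd h1 h2
  | @cons u m c hadj p ih =>
    intro h1 h2
    by_cases hm : m ∈ L
    · exact ih hm h2
    · exact ⟨u, h1, m, hm, hadj⟩

lemma good_singleton (F : SimpleGraph (Fin k)) (p : Fin k) : Good F [p] := by
  intro L₁ x L₂ h y hy z hz _ _
  cases L₁ with
  | nil => simp at hy
  | cons a t =>
    exfalso
    have hlen := congrArg List.length h
    simp at hlen

lemma good_list (F : SimpleGraph (Fin k)) (hc : F.Connected) (hac : F.IsAcyclic) (p : Fin k) :
    ∃ L : List (Fin k), L.Nodup ∧ L.toFinset = Finset.univ ∧ L.head? = some p ∧ Good F L := by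
  suffices h : ∀ (m : ℕ) (L : List (Fin k)), L.Nodup → L.head? = some p → Good F L →
      (∀ a ∈ L, ∃ w : F.Walk p a, ∀ b ∈ w.support, b ∈ L) →
      k ≤ L.length + m →
      ∃ L' : List (Fin k), L'.Nodup ∧ L'.toFinset = Finset.univ ∧ L'.head? = some p ∧ Good F L' by
    refine h k [p] (by simp) (by simp) (good_singleton F p) ?_ (by simp)
    intro a ha
    simp at ha
    subst ha
    exact ⟨SimpleGraph.Walk.nil, by simp⟩
  intro m
  induction m with
  | zero =>
    intro L hnd hhead hgood _ hlen
    refine ⟨L, hnd, ?_, hhead, hgood⟩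
    apply Finset.eq_univ_of_card
    rw [List.toFinset_card_of_nodup hnd]
    have hle : L.length ≤ k := by
      have h1 := Finset.card_le_univ L.toFinset
      rw [List.toFinset_card_of_nodup hnd] at h1
      simpa using h1
    simp only [Fintype.card_fin]
    omega
  | succ m ih =>
    intro L hnd hhead hgood hwalks hlen
    by_cases hfull : L.toFinset = Finset.univ
    · exact ⟨L, hnd, hfull, hhead, hgood⟩
    · obtain ⟨b, hb⟩ : ∃ b, b ∉ L := by
        by_contra hball
        push_neg at hball
        exact hfull (Finset.eq_univ_of_forall (fun x => by simpa using hball x))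
      have hp : p ∈ L := by
        cases L with
        | nil => simp at hhead
        | cons a t => simp at hhead; simp [hhead]
      obtain ⟨w0⟩ := hc.preconnected p b
      obtain ⟨y, hyL, x, hxL, hadjyx⟩ := exists_crossing (L := L) w0 hp hb
      have hLne : L ≠ [] := by intro h; rw [h] at hp; simp at hp
      refine ih (L ++ [x]) ?_ ?_ ?_ ?_ ?_
      · simp [List.nodup_append, hnd, hxL]; intro a ha hax; exact hxL (hax ▸ ha)
      · rw [List.head?_append_of_ne_nil _ hLne]
        exact hhead
      · intro L₁ c L₂ hsplit y₁ hy₁ z hz hadj₁ hadj₂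
        rcases append_singleton_split hsplit with ⟨hL₁, hcx, -⟩ | ⟨L₂', hsplit', -⟩
        · rw [hcx] at hadj₁ hadj₂
          by_contra hne
          obtain ⟨w₁, hw₁⟩ := hwalks y₁ (by rw [← hL₁]; exact hy₁)
          obtain ⟨w₂, hw₂⟩ := hwalks z (by rw [← hL₁]; exact hz)
          have hsupp : ∀ t ∈ (w₁.reverse.append w₂).support, t ∈ L := by
            intro t ht
            rw [SimpleGraph.Walk.mem_support_append_iff] at ht
            rcases ht with ht | ht
            · exact hw₁ t (by rwa [SimpleGraph.Walk.support_reverse, List.mem_reverse] at ht)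
            · exact hw₂ t ht
          have hPsupp : ∀ t ∈ (w₁.reverse.append w₂).bypass.support, t ∈ L :=
            fun t ht => hsupp t ((w₁.reverse.append w₂).support_bypass_subset ht)
          have hxP : x ∉ (w₁.reverse.append w₂).bypass.support := fun h => hxL (hPsupp x h)
          have pA : (SimpleGraph.Walk.cons hadj₁.symm SimpleGraph.Walk.nil : F.Walk y₁ x).IsPath := by
            rw [SimpleGraph.Walk.isPath_def]
            simp [hadj₁.ne']
          have pB : ((w₁.reverse.append w₂).bypass.concat hadj₂.symm).IsPath := by
            rw [SimpleGraph.Walk.isPath_def, SimpleGraph.Walk.support_concat,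
              List.nodup_append]
            refine ⟨(w₁.reverse.append w₂).bypass_isPath.support_nodup, List.nodup_singleton _, ?_⟩
            intro a ha b hb hab
            simp at hb
            rw [hb] at hab
            rw [hab] at ha
            exact hxP ha
          have hequ := hac.path_unique ⟨_, pA⟩ ⟨_, pB⟩
          have hweq : (SimpleGraph.Walk.cons hadj₁.symm SimpleGraph.Walk.nil : F.Walk y₁ x)
              = (w₁.reverse.append w₂).bypass.concat hadj₂.symm := congrArg Subtype.val hequ
          have hlen2 := congrArg SimpleGraph.Walk.length hweq
          rw [SimpleGraph.Walk.length_concat] at hlen2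
          simp only [SimpleGraph.Walk.length_cons, SimpleGraph.Walk.length_nil] at hlen2
          have hPlen : (w₁.reverse.append w₂).bypass.length ≠ 0 :=
            fun h => hne (SimpleGraph.Walk.eq_of_length_eq_zero h)
          omega
        · exact hgood L₁ c L₂' hsplit' y₁ hy₁ z hz hadj₁ hadj₂
      · intro a ha
        rw [List.mem_append] at ha
        rcases ha with ha | ha
        · obtain ⟨w, hw⟩ := hwalks a ha
          exact ⟨w, fun t ht => by rw [List.mem_append]; exact Or.inl (hw t ht)⟩
        · simp only [List.mem_singleton] at ha
          subst ha
          obtain ⟨w, hw⟩ := hwalks y hyL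
          refine ⟨w.concat hadjyx, ?_⟩
          intro t ht
          rw [SimpleGraph.Walk.support_concat, List.mem_append] at ht
          rw [List.mem_append]
          rcases ht with ht | ht
          · exact Or.inl (hw t ht)
          · exact Or.inr ht
      · simp only [List.length_append, List.length_singleton]
        omega

lemma exists_leaf (F : SimpleGraph (Fin k)) (hc : F.Connected) (hac : F.IsAcyclic) (hk : 2 ≤ k) :
    ∃ ℓ p₀ : Fin k, F.Adj ℓ p₀ ∧ ∀ z, F.Adj ℓ z → z = p₀ := by
  have hpos : 0 < k := by omega
  obtain ⟨L, hnd, hfull, hhead, hgood⟩ := good_list F hc hac ⟨0, hpos⟩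
  have hLne : L ≠ [] := by intro h; rw [h] at hhead; simp at hhead
  have hnbr : ∃ z, F.Adj (L.getLast hLne) z := by
    obtain ⟨z, hz⟩ := Fintype.exists_ne_of_one_lt_card (by simp; omega) (L.getLast hLne)
    obtain ⟨w⟩ := hc.preconnected (L.getLast hLne) z
    cases w with
    | nil => exact absurd rfl hz
    | cons h _ => exact ⟨_, h⟩
  obtain ⟨z₀, hz₀⟩ := hnbr
  refine ⟨L.getLast hLne, z₀, hz₀, ?_⟩
  have hsplit : L = L.dropLast ++ (L.getLast hLne) :: [] := by
    simpa using (List.dropLast_append_getLast hLne).symm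
  have hmem : ∀ t, F.Adj (L.getLast hLne) t → t ∈ L.dropLast := by
    intro t ht
    have htL : t ∈ L := by
      have : t ∈ L.toFinset := by rw [hfull]; simp
      simpa using this
    have htne : t ≠ L.getLast hLne := ht.ne'
    conv at htL => rw [hsplit]
    rw [List.mem_append] at htL
    rcases htL with h | h
    · exact h
    · simp at h; exact absurd h htne
  intro z hz
  exact hgood L.dropLast (L.getLast hLne) [] hsplit z (hmem z hz) z₀ (hmem z₀ hz₀) hz hz₀

lemma Good.erase {F : SimpleGraph (Fin k)} {L : List (Fin k)} (hL : Good F L) (ℓ : Fin k) :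
    Good F (L.erase ℓ) := by
  by_cases hmem : ℓ ∈ L
  · obtain ⟨M₁, M₂, hnot, hL12, herase⟩ := List.exists_erase_eq hmem
    rw [herase]
    intro L₁ x L₂ hsplit y hy z hz h1 h2
    rcases List.append_eq_append_iff.mp hsplit with ⟨a', ha1, ha2⟩ | ⟨c', hc1, hc2⟩
    · -- L₁ = M₁ ++ a', M₂ = a' ++ x :: L₂
      have hLsplit : L = (M₁ ++ ℓ :: a') ++ x :: L₂ := by
        rw [hL12, ha2]; simp
      refine hL _ x L₂ hLsplit y ?_ z ?_ h1 h2
      · rw [ha1] at hy; simp at hy ⊢; tauto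
      · rw [ha1] at hz; simp at hz ⊢; tauto
    · -- M₁ = L₁ ++ c', x :: L₂ = c' ++ M₂
      cases c' with
      | nil =>
        simp at hc2
        have hLsplit : L = (L₁ ++ [ℓ]) ++ x :: L₂ := by
          rw [hL12, hc1, ← hc2]; simp
        refine hL _ x L₂ hLsplit y ?_ z ?_ h1 h2
        · simp at hy ⊢; tauto
        · simp at hz ⊢; tauto
      | cons x' t =>
        have hx' : x' = x ∧ t ++ M₂ = L₂ := by
          constructor
          · have := congrArg List.head? hc2; simpa using this.symm
          · have := congrArg List.tail hc2; simpa using this.symm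
        obtain ⟨rfl, ht⟩ := hx'
        have hLsplit : L = L₁ ++ x' :: (t ++ ℓ :: M₂) := by
          rw [hL12, hc1]; simp
        exact hL L₁ x' (t ++ ℓ :: M₂) hLsplit y hy z hz h1 h2
  · rw [List.erase_of_not_mem hmem]; exact hL

end RTTAux
end Aux2
section Aux3
namespace RTTAux
variable {k n : ℕ}

def IsPathList (G : SimpleGraph (Fin n)) (D : Finset (Fin n)) (p : List (Fin n)) : Prop :=
  p.Chain' G.Adj ∧ p.Nodup ∧ ∀ x ∈ p, x ∈ D

lemma flip_adj (G : SimpleGraph (Fin n)) : flip G.Adj = G.Adj := by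
  ext x y
  exact ⟨fun h => h.symm, fun h => h.symm⟩

lemma headI_mem' {α : Type*} [Inhabited α] {l : List α} (h : l ≠ []) : l.headI ∈ l := by
  cases l with
  | nil => exact absurd rfl h
  | cons a t => simp

lemma head?_eq_headI' {α : Type*} [Inhabited α] {l : List α} (h : l ≠ []) :
    l.head? = some l.headI := by
  cases l with
  | nil => exact absurd rfl h
  | cons a t => rfl

lemma merge_round (G : SimpleGraph (Fin n)) (D : Finset (Fin n)) (a : ℕ) (hn0 : 0 < n)
    (hedge : ∀ T : Finset (Fin n), T ⊆ D → a < T.card → ∃ x ∈ T, ∃ y ∈ T, x ≠ y ∧ G.Adj x y)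
    (ℓ : ℕ) (hℓ : 0 < ℓ) :
    ∀ (P : List (List (Fin n))),
      (∀ p ∈ P, p.length = ℓ ∧ IsPathList G D p) →
      P.Pairwise (fun p q => ∀ x ∈ p, x ∉ q) →
      ∃ Q : List (List (Fin n)), (P.length - a) / 2 ≤ Q.length ∧
        (∀ q ∈ Q, q.length = 2*ℓ ∧ IsPathList G D q) ∧
        Q.Pairwise (fun p q => ∀ x ∈ p, x ∉ q) ∧
        (∀ q ∈ Q, ∀ x ∈ q, ∃ p ∈ P, x ∈ p) := by
  haveI : Inhabited (Fin n) := ⟨⟨0, hn0⟩⟩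
  suffices H : ∀ (t : ℕ) (P : List (List (Fin n))), P.length = t →
      (∀ p ∈ P, p.length = ℓ ∧ IsPathList G D p) →
      P.Pairwise (fun p q => ∀ x ∈ p, x ∉ q) →
      ∃ Q : List (List (Fin n)), (t - a) / 2 ≤ Q.length ∧
        (∀ q ∈ Q, q.length = 2*ℓ ∧ IsPathList G D q) ∧
        Q.Pairwise (fun p q => ∀ x ∈ p, x ∉ q) ∧
        (∀ q ∈ Q, ∀ x ∈ q, ∃ p ∈ P, x ∈ p) by
    exact fun P h1 h2 => H P.length P rfl h1 h2
  intro t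
  induction t using Nat.strong_induction_on with
  | _ t ih =>
    intro P hPt hprops hpair
    by_cases ht : t ≤ a
    · exact ⟨[], by omega, by simp, by simp, by simp⟩
    · push_neg at ht
      have hne : ∀ p ∈ P, p ≠ [] := by
        intro p hp h
        have h2 := (hprops p hp).1
        rw [h] at h2
        simp at h2
        omega
      have hsym : Symmetric (fun p q : List (Fin n) => ∀ x ∈ p, x ∉ q) := by
        intro p q h z hzq hzp
        exact h z hzp hzq
      haveI : Std.Symm (fun p q : List (Fin n) => ∀ x ∈ p, x ∉ q) := ⟨fun a b h => hsym h⟩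
      have hPnd : P.Nodup := by
        refine List.Pairwise.imp_of_mem ?_ hpair
        intro p q hp _ h heq
        subst heq
        obtain ⟨x, hx⟩ := List.exists_mem_of_ne_nil p (hne p hp)
        exact h x hx hx
      have hheads : (P.map List.headI).Nodup := by
        refine List.pairwise_map.mpr (List.Pairwise.imp_of_mem ?_ hpair)
        intro p q hp hq h heq
        exact h p.headI (headI_mem' (hne p hp)) (heq ▸ headI_mem' (hne q hq))
      have hsubD : (P.map List.headI).toFinset ⊆ D := by
        intro x hx
        simp only [List.mem_toFinset, List.mem_map] at hx
        obtain ⟨p, hp, rfl⟩ := hx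
        exact (hprops p hp).2.2.2 _ (headI_mem' (hne p hp))
      have hcardT : a < (P.map List.headI).toFinset.card := by
        rw [List.toFinset_card_of_nodup hheads]
        simp only [List.length_map]
        omega
      obtain ⟨x, hxT, y, hyT, hxy, hadj⟩ := hedge _ hsubD hcardT
      simp only [List.mem_toFinset, List.mem_map] at hxT hyT
      obtain ⟨p₁, hp₁, rfl⟩ := hxT
      obtain ⟨p₂, hp₂, rfl⟩ := hyT
      have hp12 : p₁ ≠ p₂ := fun h => hxy (by rw [h])
      have hdisj12 : ∀ z ∈ p₁, z ∉ p₂ := by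
        exact List.Pairwise.forall hpair hp₁ hp₂ hp12
      -- the merged path
      have hprop₁ := hprops p₁ hp₁
      have hprop₂ := hprops p₂ hp₂
      have hmerged : (p₁.reverse ++ p₂).length = 2*ℓ ∧ IsPathList G D (p₁.reverse ++ p₂) := by
        refine ⟨by simp [hprop₁.1, hprop₂.1]; omega, ?_, ?_, ?_⟩
        · show List.IsChain G.Adj (p₁.reverse ++ p₂); rw [List.isChain_append]
          refine ⟨?_, hprop₂.2.1, ?_⟩
          · rw [List.isChain_reverse]
            exact List.IsChain.imp (fun a b h => h.symm) hprop₁.2.1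
          · intro c hc d hd
            rw [List.getLast?_reverse, head?_eq_headI' (hne p₁ hp₁)] at hc
            rw [head?_eq_headI' (hne p₂ hp₂)] at hd
            simp at hc hd
            rw [hc, hd] at hadj
            exact hadj
        · rw [List.nodup_append]
          exact ⟨List.nodup_reverse.mpr hprop₁.2.2.1, hprop₂.2.2.1,
            fun z hz b hb hzb => hdisj12 z (List.mem_reverse.mp hz) (hzb ▸ hb)⟩
        · intro z hz
          rw [List.mem_append, List.mem_reverse] at hz
          rcases hz with hz | hz
          · exact hprop₁.2.2.2 z hz
          · exact hprop₂.2.2.2 z hz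
      have hp₂e : p₂ ∈ P.erase p₁ := (List.Nodup.mem_erase_iff hPnd).mpr ⟨hp12.symm, hp₂⟩
      set P' := (P.erase p₁).erase p₂ with hP'
      have hsubP' : ∀ p ∈ P', p ∈ P := fun p hp =>
        List.mem_of_mem_erase (List.mem_of_mem_erase hp)
      have hlenP' : P'.length = t - 2 := by
        rw [hP', List.length_erase_of_mem hp₂e, List.length_erase_of_mem hp₁, hPt]
        omega
      have hsubl : P'.Sublist P := (List.erase_sublist (a := p₂) (l := P.erase p₁)).trans (List.erase_sublist (a := p₁) (l := P))
      obtain ⟨Q', hQ'len, hQ'props, hQ'pair, hQ'cov⟩ := ih (t-2) (by omega) P' hlenP'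
        (fun p hp => hprops p (hsubP' p hp)) (hpair.sublist hsubl)
      have hP'ne : ∀ p ∈ P', p ≠ p₁ ∧ p ≠ p₂ := by
        intro p hp
        rw [hP', List.Nodup.mem_erase_iff (hPnd.sublist (List.erase_sublist (a := p₁) (l := P))),
          List.Nodup.mem_erase_iff hPnd] at hp
        exact ⟨hp.2.1, hp.1⟩
      refine ⟨(p₁.reverse ++ p₂) :: Q', ?_, ?_, ?_, ?_⟩
      · simp only [List.length_cons]
        omega
      · intro q hq
        rcases List.mem_cons.mp hq with rfl | hq
        · exact hmerged
        · exact hQ'props q hq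
      · rw [List.pairwise_cons]
        refine ⟨?_, hQ'pair⟩
        intro q hq z hz hzq
        obtain ⟨p, hpP', hzp⟩ := hQ'cov q hq z hzq
        rw [List.mem_append, List.mem_reverse] at hz
        have hne12 := hP'ne p hpP'
        rcases hz with hz | hz
        · exact (List.Pairwise.forall hpair hp₁
            (hsubP' p hpP') (fun h => hne12.1 h.symm)) z hz hzp
        · exact (List.Pairwise.forall hpair hp₂
            (hsubP' p hpP') (fun h => hne12.2 h.symm)) z hz hzp
      · intro q hq z hz
        rcases List.mem_cons.mp hq with rfl | hq
        · rw [List.mem_append, List.mem_reverse] at hz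
          rcases hz with hz | hz
          · exact ⟨p₁, hp₁, hz⟩
          · exact ⟨p₂, hp₂, hz⟩
        · obtain ⟨p, hp, hzp⟩ := hQ'cov q hq z hz
          exact ⟨p, hsubP' p hp, hzp⟩

lemma exists_path_list (G : SimpleGraph (Fin n)) (D : Finset (Fin n)) (a m : ℕ) (hn0 : 0 < n)
    (hedge : ∀ T : Finset (Fin n), T ⊆ D → a < T.card → ∃ x ∈ T, ∃ y ∈ T, x ≠ y ∧ G.Adj x y)
    (hD : 2*a + 5 ≤ D.card / 2^m) :
    ∃ p : List (Fin n), p.length = m ∧ p.Chain' G.Adj ∧ p.Nodup ∧ ∀ x ∈ p, x ∈ D := by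
  have main : ∀ j : ℕ, ∃ Q : List (List (Fin n)), D.card / 2^j - (2*a+4) ≤ Q.length ∧
      (∀ q ∈ Q, q.length = 2^j ∧ IsPathList G D q) ∧
      Q.Pairwise (fun p q => ∀ x ∈ p, x ∉ q) := by
    intro j
    induction j with
    | zero =>
      refine ⟨D.toList.map (fun x => [x]), ?_, ?_, ?_⟩
      · rw [pow_zero, Nat.div_one, List.length_map, Finset.length_toList]
        omega
      · intro q hq
        simp only [List.mem_map] at hq
        obtain ⟨x, hx, rfl⟩ := hq
        exact ⟨rfl, List.isChain_singleton _, by simp, by simpa using Finset.mem_toList.mp hx⟩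
      · rw [List.pairwise_map]
        refine List.Pairwise.imp_of_mem ?_ (Finset.nodup_toList D)
        intro x y _ _ hxy
        simp [hxy]
    | succ j ihj =>
      obtain ⟨Q', hQ'len, hQ'props, hQ'pair⟩ := ihj
      obtain ⟨Q, hQlen, hQprops, hQpair, -⟩ :=
        merge_round G D a hn0 hedge (2^j) (Nat.two_pow_pos j) Q' hQ'props hQ'pair
      refine ⟨Q, ?_, ?_, hQpair⟩
      · have h1 : D.card / 2^(j+1) = D.card / 2^j / 2 := by
          rw [Nat.div_div_eq_div_mul, pow_succ]
        rw [h1]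
        omega
      · intro q hq
        obtain ⟨h1, h2⟩ := hQprops q hq
        exact ⟨by rw [h1, pow_succ]; ring, h2⟩
  obtain ⟨Q, hQlen, hQprops, -⟩ := main m
  have hQne : Q ≠ [] := by
    intro h
    rw [h] at hQlen
    simp at hQlen
    omega
  obtain ⟨q, hq⟩ := List.exists_mem_of_ne_nil Q hQne
  obtain ⟨hqlen, hqch, hqnd, hqD⟩ := hQprops q hq
  refine ⟨q.take m, ?_, List.IsChain.take hqch m, (q.take_sublist m).nodup hqnd, ?_⟩
  · rw [List.length_take, hqlen]
    have := Nat.lt_two_pow_self (n := m)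
    omega
  · intro x hx
    exact hqD x ((q.take_sublist m).subset hx)

end RTTAux
end Aux3
section Aux4
namespace RTTAux
open scoped Classical
variable {k n : ℕ}

lemma common_nbrs (G : SimpleGraph (Fin n)) (μ : ℝ) (hμ : 0 < μ) (hμ1 : μ ≤ 1)
    (hdeg : ∀ x : Fin n, μ * n ≤ ((nbr G x).card : ℝ)) (hn : 8 / μ^2 ≤ (n:ℝ)) (v : Fin n) :
    (μ/4) * n ≤ ((Finset.univ.filter
      (fun u => u ≠ v ∧ (μ^2/4) * n ≤ ((nbr G u ∩ nbr G v).card : ℝ))).card : ℝ) := by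
  by_contra hR
  push_neg at hR
  set R := Finset.univ.filter
      (fun u => u ≠ v ∧ (μ^2/4) * n ≤ ((nbr G u ∩ nbr G v).card : ℝ)) with hRdef
  set S := insert v R with hSdef
  set B := nbr G v with hBdef
  have hμn8 : (8:ℝ) ≤ μ * n := by
    have h8 : 8 ≤ μ^2 * n := by
      rw [div_le_iff₀ (by positivity)] at hn
      linarith
    nlinarith [Nat.cast_nonneg (α := ℝ) n]
  have hid : ∑ w ∈ B, ((nbr G w \ S).card) = ∑ x ∈ Finset.univ \ S, ((nbr G x ∩ B).card) := by
    have h1 : ∀ w : Fin n, (nbr G w \ S) = (Finset.univ \ S).filter (fun x => G.Adj w x) := by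
      intro w
      ext x
      simp only [Finset.mem_sdiff, Finset.mem_filter, Finset.mem_univ, true_and, mem_nbr]
      tauto
    have h2 : ∀ x : Fin n, (nbr G x ∩ B) = B.filter (fun w => G.Adj w x) := by
      intro x
      ext w
      simp only [Finset.mem_inter, Finset.mem_filter, mem_nbr, hBdef]
      constructor
      · rintro ⟨hxw, hvw⟩; exact ⟨hvw, hxw.symm⟩
      · rintro ⟨hvw, hwx⟩; exact ⟨hwx.symm, hvw⟩
    calc ∑ w ∈ B, ((nbr G w \ S).card)
        = ∑ w ∈ B, ∑ x ∈ Finset.univ \ S, (if G.Adj w x then 1 else 0) := by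
          refine Finset.sum_congr rfl ?_
          intro w _
          rw [h1 w, Finset.card_filter]
      _ = ∑ x ∈ Finset.univ \ S, ∑ w ∈ B, (if G.Adj w x then 1 else 0) := Finset.sum_comm
      _ = ∑ x ∈ Finset.univ \ S, ((nbr G x ∩ B).card) := by
          refine Finset.sum_congr rfl ?_
          intro x _
          rw [h2 x, Finset.card_filter]
  have hScard : ((S.card : ℕ) : ℝ) ≤ (μ/4)*n + 1 := by
    have h1 : S.card ≤ R.card + 1 := Finset.card_insert_le v R
    have h2 : ((S.card : ℕ):ℝ) ≤ ((R.card : ℕ):ℝ) + 1 := by exact_mod_cast h1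
    linarith
  have hlow : (B.card : ℝ) * (μ*n - ((μ/4)*n + 1)) ≤ ∑ w ∈ B, ((nbr G w \ S).card : ℝ) := by
    have hterm : ∀ w ∈ B, μ*n - ((μ/4)*n+1) ≤ ((nbr G w \ S).card : ℝ) := by
      intro w _
      have h1 : (nbr G w).card ≤ (nbr G w \ S).card + S.card :=
        Finset.card_le_card_sdiff_add_card
      have h1' : ((nbr G w).card:ℝ) ≤ ((nbr G w \ S).card:ℝ) + S.card := by exact_mod_cast h1
      have h2 := hdeg w
      linarith
    calc (B.card:ℝ) * (μ*n - ((μ/4)*n+1)) = B.card • (μ*n - ((μ/4)*n+1)) := by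
          rw [nsmul_eq_mul]
      _ ≤ ∑ w ∈ B, ((nbr G w \ S).card : ℝ) := Finset.card_nsmul_le_sum B _ _ hterm
  have hup : ∑ x ∈ Finset.univ \ S, ((nbr G x ∩ B).card : ℝ) ≤ n * ((μ^2/4)*n) := by
    have hterm : ∀ x ∈ Finset.univ \ S, ((nbr G x ∩ B).card:ℝ) ≤ (μ^2/4)*n := by
      intro x hx
      rw [Finset.mem_sdiff, hSdef, Finset.mem_insert] at hx
      push_neg at hx
      obtain ⟨-, hxv, hxR⟩ := hx
      rw [hRdef, Finset.mem_filter] at hxR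
      push_neg at hxR
      have := hxR (Finset.mem_univ x) hxv
      linarith [this]
    calc ∑ x ∈ Finset.univ \ S, ((nbr G x ∩ B).card : ℝ)
        ≤ (Finset.univ \ S).card • ((μ^2/4)*n) := Finset.sum_le_card_nsmul _ _ _ hterm
      _ = ((Finset.univ \ S).card : ℝ) * ((μ^2/4)*n) := by rw [nsmul_eq_mul]
      _ ≤ n * ((μ^2/4)*n) := by
          have h1 : (Finset.univ \ S).card ≤ n := by
            refine le_trans (Finset.card_le_card (Finset.subset_univ _)) ?_
            simp
          have h1' : ((Finset.univ \ S).card:ℝ) ≤ n := by exact_mod_cast h1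
          have h0 : (0:ℝ) ≤ (μ^2/4)*n := by positivity
          exact mul_le_mul_of_nonneg_right h1' h0
  have hcast1 : ((∑ w ∈ B, (nbr G w \ S).card : ℕ) : ℝ) = ∑ w ∈ B, ((nbr G w \ S).card:ℝ) := by
    push_cast
    rfl
  have hcast2 : ((∑ x ∈ Finset.univ \ S, (nbr G x ∩ B).card : ℕ) : ℝ)
      = ∑ x ∈ Finset.univ \ S, ((nbr G x ∩ B).card:ℝ) := by
    push_cast
    rfl
  have hmid : ∑ w ∈ B, ((nbr G w \ S).card:ℝ) = ∑ x ∈ Finset.univ \ S, ((nbr G x ∩ B).card:ℝ) := by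
    rw [← hcast1, ← hcast2, hid]
  have hpos : (0:ℝ) ≤ μ*n - ((μ/4)*n+1) := by nlinarith
  have hBlow : μ * n ≤ (B.card:ℝ) := hdeg v
  have hkey : μ*n * (μ*n - ((μ/4)*n + 1)) ≤ n * ((μ^2/4)*n) := by
    calc μ*n * (μ*n - ((μ/4)*n + 1)) ≤ (B.card:ℝ) * (μ*n - ((μ/4)*n + 1)) :=
          mul_le_mul_of_nonneg_right hBlow hpos
      _ ≤ ∑ w ∈ B, ((nbr G w \ S).card:ℝ) := hlow
      _ = ∑ x ∈ Finset.univ \ S, ((nbr G x ∩ B).card:ℝ) := hmid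
      _ ≤ n * ((μ^2/4)*n) := hup
  nlinarith [hμn8, hkey]

end RTTAux
end Aux4
section Aux5
namespace RTTAux
open RTT
open scoped Classical
variable {k n : ℕ}

lemma spans_top {G : SimpleGraph (Fin n)} {S : Finset (Fin n)} (h : G.IsNClique k S) :
    SpansCopy (⊤ : SimpleGraph (Fin k)) G S := by
  have hcard : S.card = k := h.card_eq
  let e : Fin k ≃ {x // x ∈ S} := (finCongr hcard.symm).trans S.equivFin.symm
  refine ⟨fun i => (e i : Fin n), ?_, ?_, ?_⟩
  · intro a b hab
    exact e.injective (Subtype.ext hab)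
  · intro a b hab
    have hne : (e a : Fin n) ≠ (e b : Fin n) := by
      intro hcontra
      exact hab.ne (e.injective (Subtype.ext hcontra))
    exact h.isClique (by simp) (by simp) hne
  · ext x
    simp only [Finset.mem_image, Finset.mem_univ, true_and]
    constructor
    · rintro ⟨i, rfl⟩
      exact (e i).2
    · intro hx
      exact ⟨e.symm ⟨x, hx⟩, by simp⟩

lemma spans_cycle {G : SimpleGraph (Fin n)} (hk : 3 ≤ k) (v : Fin n) (p : List (Fin n))
    (hlen : p.length = k - 1) (hch : p.Chain' G.Adj) (hnd : p.Nodup) (hv : v ∉ p)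
    (hadj : ∀ x ∈ p, G.Adj v x) :
    SpansCopy (SimpleGraph.cycleGraph k) G (insert v p.toFinset) := by
  have hkpos : 0 < k := by omega
  haveI : NeZero k := ⟨by omega⟩
  have hone : ((1 : Fin k)).val = 1 := by
    have h1 : ((1 : Fin k)).val = 1 % k := rfl
    have h2 : 1 % k = 1 := Nat.mod_eq_of_lt (by omega)
    rw [h1, h2]
  set f : Fin k → Fin n :=
    (fun i => if h : i.val = 0 then v else p.get ⟨i.val - 1, by rw [hlen]; omega⟩) with hf
  have hf0 : ∀ i : Fin k, i.val = 0 → f i = v := by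
    intro i hi
    simp only [hf]
    rw [dif_pos hi]
  have hfpos : ∀ (i : Fin k) (hi : ¬ i.val = 0), f i = p.get ⟨i.val - 1, by rw [hlen]; omega⟩ := by
    intro i hi
    simp only [hf]
    rw [dif_neg hi]
  refine ⟨f, ?_, ?_, ?_⟩
  · intro a b hab
    by_cases ha : a.val = 0 <;> by_cases hb : b.val = 0
    · exact Fin.ext (by omega)
    · rw [hf0 a ha, hfpos b hb] at hab
      exact absurd (hab.symm ▸ p.get_mem _) hv
    · rw [hfpos a ha, hf0 b hb] at hab
      exact absurd (hab ▸ p.get_mem _) hv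
    · rw [hfpos a ha, hfpos b hb] at hab
      have hv1 : a.val - 1 = b.val - 1 := by
        have := congrArg Fin.val ((List.Nodup.get_inj_iff hnd).mp hab)
        simpa using this
      exact Fin.ext (by omega)
  · have claim : ∀ j : Fin k, G.Adj (f j) (f (j+1)) := by
      intro j
      have hjadd : ((j + 1 : Fin k)).val = (j.val + 1) % k := by
        rw [Fin.add_def, hone]
      by_cases hj : j.val = k - 1
      · have h1 : ((j+1 : Fin k)).val = 0 := by
          rw [hjadd, hj]
          have hkk : k - 1 + 1 = k := by omega
          rw [hkk, Nat.mod_self]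
        have h2 : ¬ j.val = 0 := by omega
        rw [hf0 _ h1, hfpos _ h2]
        exact (hadj _ (p.get_mem _)).symm
      · have hjlt := j.isLt
        have h1 : ((j+1 : Fin k)).val = j.val + 1 := by
          rw [hjadd]
          exact Nat.mod_eq_of_lt (by omega)
        have h1ne : ¬ ((j+1 : Fin k)).val = 0 := by omega
        by_cases hj0 : j.val = 0
        · rw [hf0 _ hj0, hfpos _ h1ne]
          exact hadj _ (p.get_mem _)
        · rw [hfpos _ hj0, hfpos _ h1ne]
          have hstep := List.isChain_iff_getElem.mp hch (j.val - 1) (by rw [hlen]; omega)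
          have h3 : ((j+1 : Fin k)).val - 1 = j.val - 1 + 1 := by omega
          simp only [h3]
          exact hstep
    intro a b hab
    rw [SimpleGraph.cycleGraph_adj'] at hab
    rcases hab with hab | hab
    · have heq : a = b + 1 := by
        have h1 : a - b = 1 := Fin.ext (by rw [hone]; exact hab)
        rw [sub_eq_iff_eq_add.mp h1, add_comm]
      rw [heq]
      exact (claim b).symm
    · have heq : b = a + 1 := by
        have h1 : b - a = 1 := Fin.ext (by rw [hone]; exact hab)
        rw [sub_eq_iff_eq_add.mp h1, add_comm]
      rw [heq]
      exact claim a
  · ext x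
    simp only [Finset.mem_image, Finset.mem_univ, true_and, Finset.mem_insert, List.mem_toFinset]
    constructor
    · rintro ⟨i, rfl⟩
      by_cases hi : i.val = 0
      · rw [hf0 i hi]; exact Or.inl rfl
      · rw [hfpos i hi]; exact Or.inr (p.get_mem _)
    · intro hx
      rcases hx with rfl | hx
      · exact ⟨⟨0, hkpos⟩, hf0 _ rfl⟩
      · obtain ⟨m, hm⟩ := List.mem_iff_get.mp hx
        have hmk : (m : ℕ) + 1 < k := by
          have h2 := m.isLt
          omega
        refine ⟨⟨(m : ℕ) + 1, hmk⟩, ?_⟩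
        rw [hfpos _ (by simp)]
        simp only [Nat.add_sub_cancel]
        rw [← hm]

lemma tree_case {F : SimpleGraph (Fin k)} (htree : F.IsTree) (hk : 3 ≤ k)
    {G : SimpleGraph (Fin n)} (C A : Finset (Fin n)) (hCA : Disjoint C A) (hC : C.Nonempty)
    (hdeg : ∀ x : Fin n, A.card + (k-1) ≤ (nbr G x).card) (hn : A.card + (k-1) ≤ n)
    (u v : Fin n) (hu : u ∈ A) (hv : v ∈ A)
    (hCu : ∀ w ∈ C, G.Adj u w) (hCv : ∀ w ∈ C, G.Adj v w) :
    ∃ S : Finset (Fin n), S.card = k - 1 ∧ (∀ x ∈ S, x ∉ A) ∧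
      SpansCopy F G (insert u S) ∧ SpansCopy F G (insert v S) := by
  obtain ⟨ℓ, p₀, hadjℓ, hleaf⟩ := exists_leaf F htree.isConnected htree.IsAcyclic (by omega)
  obtain ⟨L, hnd, hfull, hhead, hgood⟩ := good_list F htree.isConnected htree.IsAcyclic p₀
  have hLlen : L.length = k := by
    have h1 := List.toFinset_card_of_nodup hnd
    rw [hfull] at h1
    simpa using h1.symm
  have hℓp : ℓ ≠ p₀ := hadjℓ.ne
  have hℓL : ℓ ∈ L := by
    have : ℓ ∈ L.toFinset := by rw [hfull]; simp
    simpa using this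
  obtain ⟨T, hT⟩ : ∃ T, L = p₀ :: T := by
    cases L with
    | nil => simp at hhead
    | cons a t => simp at hhead; exact ⟨t, by rw [hhead]⟩
  have hL' : L.erase ℓ = p₀ :: T.erase ℓ := by
    rw [hT, List.erase_cons_tail]
    simp [hℓp.symm]
  have hnd' : (L.erase ℓ).Nodup := hnd.sublist List.erase_sublist
  have hgood' : Good F (L.erase ℓ) := hgood.erase ℓ
  have hlen' : (L.erase ℓ).length = k - 1 := by
    rw [List.length_erase_of_mem hℓL, hLlen]
  have hcomplete : ∀ z : Fin k, z ≠ ℓ → z ∈ L.erase ℓ := by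
    intro z hz
    rw [List.mem_erase_of_ne hz]
    have : z ∈ L.toFinset := by rw [hfull]; simp
    simpa using this
  have hℓnot : ℓ ∉ L.erase ℓ := by
    intro hcontra
    exact ((List.Nodup.mem_erase_iff hnd).mp hcontra).1 rfl
  obtain ⟨g, hg1, hg2, hg3, hg4⟩ := greedy_embed G F C A hCA hC (L.erase ℓ) hnd' hgood'
    (fun x => by rw [hlen']; exact hdeg x) (by rw [hlen']; exact hn)
  have hL'ne : L.erase ℓ ≠ [] := by
    rw [hL']
    simp
  have hheadC : g p₀ ∈ C := by
    have := hg3 hL'ne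
    have hhd : (L.erase ℓ).head hL'ne = p₀ := by
      have h1 : (L.erase ℓ).head? = some p₀ := by rw [hL']; rfl
      have h2 : (L.erase ℓ).head? = some ((L.erase ℓ).head hL'ne) := List.head?_eq_head hL'ne
      rw [h1] at h2
      exact (Option.some_inj.mp h2).symm
    rwa [hhd] at this
  set S : Finset (Fin n) := (((L.erase ℓ).map g).toFinset) with hSdef
  have hmapnd : ((L.erase ℓ).map g).Nodup := hnd'.map_on hg1
  have hScard : S.card = k - 1 := by
    rw [hSdef, List.toFinset_card_of_nodup hmapnd, List.length_map, hlen']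
  have hSA : ∀ x ∈ S, x ∉ A := by
    intro x hx
    rw [hSdef, List.mem_toFinset, List.mem_map] at hx
    obtain ⟨z, hz, rfl⟩ := hx
    exact hg2 z hz
  have build : ∀ w : Fin n, w ∈ A → (∀ c ∈ C, G.Adj w c) → SpansCopy F G (insert w S) := by
    intro w hwA hwC
    set fw : Fin k → Fin n := (fun a => if a = ℓ then w else g a) with hfw
    have hfwℓ : fw ℓ = w := by simp [hfw]
    have hfwne : ∀ a : Fin k, a ≠ ℓ → fw a = g a := by
      intro a ha
      simp [hfw, ha]
    refine ⟨fw, ?_, ?_, ?_⟩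
    · intro a b hab
      by_cases ha : a = ℓ <;> by_cases hb : b = ℓ
      · rw [ha, hb]
      · rw [ha, hfwℓ, hfwne b hb] at hab
        exact absurd (hab ▸ hwA) (hg2 b (hcomplete b hb))
      · rw [hb, hfwℓ, hfwne a ha] at hab
        exact absurd (hab.symm ▸ hwA) (hg2 a (hcomplete a ha))
      · rw [hfwne a ha, hfwne b hb] at hab
        exact hg1 a (hcomplete a ha) b (hcomplete b hb) hab
    · intro a b hadj
      by_cases ha : a = ℓ <;> by_cases hb : b = ℓ
      · rw [ha, hb] at hadj
        exact absurd hadj (F.loopless.irrefl ℓ)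
      · have hbp : b = p₀ := hleaf b (ha ▸ hadj)
        rw [ha, hfwℓ, hfwne b hb, hbp]
        exact hwC _ hheadC
      · have hap : a = p₀ := hleaf a (hb ▸ hadj.symm)
        rw [hb, hfwℓ, hfwne a ha, hap]
        exact (hwC _ hheadC).symm
      · rw [hfwne a ha, hfwne b hb]
        exact hg4 a (hcomplete a ha) b (hcomplete b hb) hadj
    · ext x
      simp only [Finset.mem_image, Finset.mem_univ, true_and, Finset.mem_insert]
      constructor
      · rintro ⟨i, rfl⟩
        by_cases hi : i = ℓ
        · rw [hi, hfwℓ]; exact Or.inl rfl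
        · rw [hfwne i hi]
          refine Or.inr ?_
          rw [hSdef, List.mem_toFinset, List.mem_map]
          exact ⟨i, hcomplete i hi, rfl⟩
      · intro hx
        rcases hx with rfl | hx
        · exact ⟨ℓ, hfwℓ⟩
        · rw [hSdef, List.mem_toFinset, List.mem_map] at hx
          obtain ⟨z, hz, rfl⟩ := hx
          have hzℓ : z ≠ ℓ := fun h => hℓnot (h ▸ hz)
          exact ⟨z, hfwne z hzℓ⟩
  exact ⟨S, hScard, hSA, build u hu hCu, build v hv hCv⟩

end RTTAux
end Aux5

end RTTAuxSection

open RTTAux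
set_option maxHeartbeats 1000000

open RTT in
/-- Every vertex is `(F, (μ²/8)n, 1)`-reachable to at least `(μ/4)n`
other vertices. -/
theorem reachable_to_many :
    ∀ k r : ℕ, 3 ≤ k → ∀ F : SimpleGraph (Fin k),
    ((F = ⊤ ∧ r = k - 1) ∨
     ((F.IsTree ∨ F = SimpleGraph.cycleGraph k) ∧ r = 2)) →
    ∀ μ : ℝ, 0 < μ →
    ∃ α : ℝ, 0 < α ∧ ∃ N : ℕ, ∀ n : ℕ, N ≤ n →
      ∀ G : SimpleGraph (Fin n),
        MinDegGE G (μ * n) → IndepBound G r (α * n) →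
        ∀ v : Fin n, ∃ R : Finset (Fin n), v ∉ R ∧ (μ / 4) * n ≤ (R.card : ℝ) ∧
          ∀ u ∈ R, FReachable F G ((μ ^ 2 / 8) * n) 1 v u := by
  intro k r hk F hF μ hμ
  classical
  refine ⟨μ^2 / 2^(k+10), by positivity, max 1 ⌈(2:ℝ)^(k+12) * ((k:ℝ)+12) / μ^2⌉₊, ?_⟩
  intro n hn G hdegG hind v
  have hn0 : 0 < n := v.pos
  have hnn : (2:ℝ)^(k+12) * ((k:ℝ)+12) / μ^2 ≤ n := by
    have h1 : (⌈(2:ℝ)^(k+12) * ((k:ℝ)+12) / μ^2⌉₊ : ℝ) ≤ n := by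
      have h2 : ⌈(2:ℝ)^(k+12) * ((k:ℝ)+12) / μ^2⌉₊ ≤ n := le_trans (le_max_right _ _) hn
      exact_mod_cast h2
    exact le_trans (Nat.le_ceil _) h1
  have hXbig : (2:ℝ)^(k+12) * ((k:ℝ)+12) ≤ μ^2 * n := by
    rw [div_le_iff₀ (by positivity)] at hnn
    nlinarith
  have hpow12 : (4096:ℝ) ≤ 2^(k+12) := by
    calc (4096:ℝ) = 2^12 := by norm_num
      _ ≤ 2^(k+12) := by
          apply pow_le_pow_right₀ (by norm_num)
          omega
  have hXlarge : (2:ℝ)^(k+12) ≤ μ^2 * n := by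
    have h1 : (1:ℝ) ≤ (k:ℝ)+12 := by
      have : (0:ℝ) ≤ (k:ℝ) := Nat.cast_nonneg k
      linarith
    nlinarith [pow_pos (show (0:ℝ) < 2 by norm_num) (k+12)]
  have hX32 : (4096:ℝ) ≤ μ^2 * n := le_trans hpow12 hXlarge
  have hdeg : ∀ x : Fin n, μ*n ≤ ((nbr G x).card:ℝ) := fun x => by
    rw [← ncard_eq_nbr_card]
    exact hdegG x
  have hnbrle : ∀ x : Fin n, (nbr G x).card ≤ n := fun x => by
    simpa using Finset.card_le_univ (nbr G x)
  have hnpos : (0:ℝ) < n := by exact_mod_cast hn0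
  have hμ1 : μ ≤ 1 := by
    have h1 := hdeg v
    have h2 : ((nbr G v).card:ℝ) ≤ n := by exact_mod_cast hnbrle v
    nlinarith
  have hcnt := common_nbrs G μ hμ hμ1 hdeg (by rw [div_le_iff₀ (by positivity)]; nlinarith) v
  refine ⟨_, ?_, hcnt, ?_⟩
  · simp
  · intro u hu
    rw [Finset.mem_filter] at hu
    obtain ⟨-, hune, hcomm⟩ := hu
    intro W hW
    set A : Finset (Fin n) := insert u (insert v W) with hA
    set C : Finset (Fin n) := (nbr G u ∩ nbr G v) \ A with hC
    have hCA : Disjoint C A := Finset.sdiff_disjoint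
    have hAcard : (A.card:ℝ) ≤ (μ^2/8)*n + 2 := by
      have h1 : A.card ≤ W.card + 2 := by
        rw [hA]
        have h2 := Finset.card_insert_le u (insert v W)
        have h3 := Finset.card_insert_le v W
        omega
      have h2 : ((A.card:ℕ):ℝ) ≤ ((W.card:ℕ):ℝ) + 2 := by exact_mod_cast h1
      linarith
    have hCcard : (μ^2/8)*n - 2 ≤ (C.card:ℝ) := by
      have h1 : (nbr G u ∩ nbr G v).card ≤ C.card + A.card := by
        rw [hC]
        exact Finset.card_le_card_sdiff_add_card
      have h2 : ((nbr G u ∩ nbr G v).card:ℝ) ≤ (C.card:ℝ) + A.card := by exact_mod_cast h1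
      have h3 : (μ^2/4)*n ≤ ((nbr G u ∩ nbr G v).card:ℝ) := hcomm
      linarith
    have hCsub : ∀ x ∈ C, x ∈ nbr G u ∧ x ∈ nbr G v ∧ x ∉ A := by
      intro x hx
      rw [hC, Finset.mem_sdiff, Finset.mem_inter] at hx
      tauto
    have hWsubA : W ⊆ A := by
      intro x hx
      rw [hA]
      simp [hx]
    have huA : u ∈ A := by rw [hA]; simp
    have hvA : v ∈ A := by rw [hA]; simp
    have hCu : ∀ w ∈ C, G.Adj u w := fun w hw => mem_nbr.mp (hCsub w hw).1
    have hCv : ∀ w ∈ C, G.Adj v w := fun w hw => mem_nbr.mp (hCsub w hw).2.1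
    have package : ∀ S : Finset (Fin n), S.card = k - 1 → (∀ x ∈ S, x ∉ A) →
        PerfTilingOn F G (insert v S) → PerfTilingOn F G (insert u S) →
        ∃ S' : Finset (Fin n), Disjoint S' W ∧ v ∉ S' ∧ u ∉ S' ∧ S'.card ≤ k*1 - 1 ∧
          PerfTilingOn F G (insert v S') ∧ PerfTilingOn F G (insert u S') := by
      intro S h1 h2 h3 h4
      refine ⟨S, ?_, ?_, ?_, ?_, h3, h4⟩
      · exact Finset.disjoint_left.mpr (fun {x} hx hxW => h2 x hx (hWsubA hxW))
      · exact fun hvS => h2 v hvS hvA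
      · exact fun huS => h2 u huS huA
      · rw [h1]; omega
    rcases hF with ⟨hFtop, hr⟩ | ⟨hFt, hr⟩
    · -- clique case
      subst hFtop
      subst hr
      have hclq : ∃ T, T ⊆ C ∧ G.IsNClique (k-1) T := by
        by_contra hcon
        push_neg at hcon
        have hle := hind C (fun T hT => hcon T hT)
        have hpow10 : (1024:ℝ) ≤ 2^(k+10) := by
          calc (1024:ℝ) = 2^10 := by norm_num
            _ ≤ 2^(k+10) := by
                apply pow_le_pow_right₀ (by norm_num)
                omega
        have hαn : μ^2/2^(k+10) * n ≤ (μ^2 * n)/1024 := by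
          have he : μ^2/2^(k+10) * (n:ℝ) = (μ^2*n)/2^(k+10) := by ring
          rw [he]
          exact div_le_div_of_nonneg_left (by positivity) (by norm_num) hpow10
        linarith
      obtain ⟨T, hTC, hclqT⟩ := hclq
      have hins : ∀ w : Fin n, (∀ c ∈ C, G.Adj w c) → G.IsNClique k (insert w T) := by
        intro w hwC
        have h1 := hclqT.insert (fun b hb => hwC b (hTC hb))
        rwa [show k - 1 + 1 = k from by omega] at h1
      exact package T hclqT.card_eq (fun x hx => (hCsub x (hTC hx)).2.2)
        (perf_single (spans_top (hins v hCv))) (perf_single (spans_top (hins u hCu)))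
    · -- tree or cycle, r = 2
      subst hr
      have hedgeC : ∀ T : Finset (Fin n), T ⊆ C → ⌊μ^2/2^(k+10) * n⌋₊ < T.card →
          ∃ x ∈ T, ∃ y ∈ T, x ≠ y ∧ G.Adj x y := by
        intro T hTC hTcard
        by_contra hcon
        push_neg at hcon
        have hno : ∀ T' ⊆ T, ¬ G.IsNClique 2 T' := by
          intro T' hT' hcl
          obtain ⟨x, y, hxy, hxyT⟩ := Finset.card_eq_two.mp hcl.card_eq
          have hadjxy : G.Adj x y := hcl.isClique (by rw [hxyT]; simp) (by rw [hxyT]; simp) hxy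
          exact (hcon x (hT' (by rw [hxyT]; simp)) y (hT' (by rw [hxyT]; simp)) hxy) hadjxy
        have hle := hind T hno
        have hfl : μ^2/2^(k+10) * n < (⌊μ^2/2^(k+10) * n⌋₊ : ℝ) + 1 :=
          Nat.lt_floor_add_one _
        have hTc : (⌊μ^2/2^(k+10) * n⌋₊ : ℝ) + 1 ≤ (T.card:ℝ) := by
          exact_mod_cast hTcard
        linarith
      have hdeg' : ∀ x : Fin n, A.card + (k-1) ≤ (nbr G x).card := by
        intro x
        have h1 : ((A.card:ℝ)) + ((k:ℝ) - 1) ≤ μ * n := by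
          have h2k : ((k:ℝ)) < 2^(k+12) := by
            have h3 : (k:ℕ) < 2^k := Nat.lt_two_pow_self (n := k)
            have h4 : ((k:ℝ)) < 2^k := by exact_mod_cast h3
            have h5 : (2:ℝ)^k ≤ 2^(k+12) := by
              apply pow_le_pow_right₀ (by norm_num)
              omega
            linarith
          have hμX : μ^2 * n ≤ μ * n := by nlinarith
          nlinarith [hXlarge]
        have h2 : ((A.card:ℝ)) + (((k:ℕ) - 1 : ℕ):ℝ) ≤ ((nbr G x).card:ℝ) := by
          have h3 : (((k:ℕ) - 1 : ℕ):ℝ) ≤ (k:ℝ) - 1 := by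
            have : (1:ℕ) ≤ k := by omega
            push_cast [Nat.cast_sub this]
            linarith
          linarith [hdeg x]
        exact_mod_cast h2
      have hn' : A.card + (k-1) ≤ n := le_trans (hdeg' v) (hnbrle v)
      have hCne : C.Nonempty := by
        rw [← Finset.card_pos]
        by_contra hcon
        push_neg at hcon
        have h0 : C.card = 0 := by omega
        have h1 : ((C.card:ℕ):ℝ) = 0 := by rw [h0]; norm_num
        linarith
      rcases hFt with htree | hcyc
      · -- tree
        obtain ⟨S, hScard, hSA, hcopyu, hcopyv⟩ :=
          tree_case htree hk C A hCA hCne hdeg' hn' u v huA hvA hCu hCv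
        exact package S hScard hSA (perf_single hcopyv) (perf_single hcopyu)
      · -- cycle
        subst hcyc
        obtain ⟨a, ha⟩ : ∃ a : ℕ, a = ⌊μ^2/2^(k+10) * n⌋₊ := ⟨_, rfl⟩
        have hP : (0:ℝ) < 2^(k-1) := by positivity
        have hP2 : (2:ℝ)^(k-1) * 2048 = 2^(k+10) := by
          have hexp : (k-1)+11 = k+10 := by omega
          rw [← hexp, pow_add]
          norm_num
        have hP3 : (2:ℝ)^(k-1) * 8192 = 2^(k+12) := by
          have hexp : (k-1)+13 = k+12 := by omega
          rw [← hexp, pow_add]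
          norm_num
        have hacast : (a:ℝ) ≤ μ^2/2^(k+10) * n := by rw [ha]; exact Nat.floor_le (by positivity)
        have haP : (a:ℝ) * 2^(k-1) ≤ (μ^2*n) / 2048 := by
          have h1 : (a:ℝ) * 2^(k-1) ≤ (μ^2/2^(k+10) * n) * 2^(k-1) :=
            mul_le_mul_of_nonneg_right hacast hP.le
          have h2 : (μ^2/2^(k+10) * n) * 2^(k-1) = (μ^2*n) / 2048 := by
            rw [← hP2]
            field_simp
          linarith [h2 ▸ h1]
        have hPX : (2:ℝ)^(k-1) * 8192 ≤ μ^2 * n := hP3 ▸ hXlarge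
        have hkey : ((2*(a:ℝ)+5) * 2^(k-1)) ≤ (C.card:ℝ) := by
          have hexpand : (2*(a:ℝ)+5) * 2^(k-1) = 2*((a:ℝ)*2^(k-1)) + 5*2^(k-1) := by ring
          rw [hexpand]
          linarith [haP, hPX, hX32, hCcard]
        have hD : 2*a + 5 ≤ C.card / 2^(k-1) := by
          rw [Nat.le_div_iff_mul_le (Nat.two_pow_pos (k-1))]
          have hcst : (((2*a+5) * 2^(k-1) : ℕ):ℝ) = (2*(a:ℝ)+5) * 2^(k-1) := by
            push_cast
            ring
          have h2 := hkey
          rw [← hcst] at h2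
          exact_mod_cast h2
        obtain ⟨p, hplen, hpch, hpnd, hpC⟩ := exists_path_list G C a (k-1) hn0 (ha ▸ hedgeC) hD
        set S : Finset (Fin n) := p.toFinset with hS
        have hScard : S.card = k - 1 := by
          rw [hS, List.toFinset_card_of_nodup hpnd, hplen]
        have hSA : ∀ x ∈ S, x ∉ A := by
          intro x hx
          rw [hS, List.mem_toFinset] at hx
          exact (hCsub x (hpC x hx)).2.2
        have hvp : v ∉ p := fun hvp => (hCsub v (hpC v hvp)).2.2 hvA
        have hup : u ∉ p := fun hup => (hCsub u (hpC u hup)).2.2 huA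
        exact package S hScard hSA
          (perf_single (spans_cycle hk v p hplen hpch hpnd hvp
            (fun x hx => hCv x (hpC x hx))))
          (perf_single (spans_cycle hk u p hplen hpch hpnd hup
            (fun x hx => hCu x (hpC x hx))))
end

section
/- Given integers k, t ∈ ℕ with k ≥ 3 and a constant β > 0, the following holds for all sufficiently large n ∈ ℕ. Let F be a k-vertex graph and G an n-vertex graph with a partition 𝒫 = {V_1, …, V_C} of V(G) such that each V_i is (F, βn, t)-closed. For distinct i, j ∈ [C], if there exist two (F,β)-robust k-vectors s and t' with s − t' = u_i − u_j (where u_i, u_j are unit vectors in ℤ^C), then V_i ∪ V_j is (F, (β/2)n, 2kt)-closed. -/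
open Finset

namespace RTT

variable {k n : ℕ} {F : SimpleGraph (Fin k)} {G : SimpleGraph (Fin n)}

lemma spans_card {S : Finset (Fin n)} (h : SpansCopy F G S) : S.card = k := by
  obtain ⟨f, hf, -, hfS⟩ := h
  rw [← hfS, Finset.card_image_of_injective _ hf, Finset.card_univ, Fintype.card_fin]

lemma perf_empty : PerfTilingOn F G ∅ :=
  ⟨∅, ⟨fun S h => absurd h (Finset.notMem_empty S),
    fun S h => absurd h (Finset.notMem_empty S)⟩, by simp⟩

lemma spans_perf {S : Finset (Fin n)} (h : SpansCopy F G S) : PerfTilingOn F G S :=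
  ⟨{S}, ⟨fun S' h' => by rw [Finset.mem_singleton] at h'; exact h' ▸ h,
    fun S' h' S'' h'' hne => by
      rw [Finset.mem_singleton] at h' h''; exact absurd (h'.trans h''.symm) hne⟩, by simp⟩

lemma tiling_union {A B : Finset (Fin n)} (hA : PerfTilingOn F G A)
    (hB : PerfTilingOn F G B) (hAB : Disjoint A B) : PerfTilingOn F G (A ∪ B) := by
  obtain ⟨T1, ⟨hc1, hd1⟩, hu1⟩ := hA
  obtain ⟨T2, ⟨hc2, hd2⟩, hu2⟩ := hB
  refine ⟨T1 ∪ T2, ⟨?_, ?_⟩, ?_⟩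
  · intro S hS
    rcases Finset.mem_union.mp hS with h | h
    exacts [hc1 S h, hc2 S h]
  · intro S hS S' hS' hne
    rcases Finset.mem_union.mp hS with h | h <;> rcases Finset.mem_union.mp hS' with h' | h'
    · exact hd1 S h S' h' hne
    · exact hAB.mono (hu1 ▸ Finset.subset_biUnion_of_mem id h)
        (hu2 ▸ Finset.subset_biUnion_of_mem id h')
    · exact hAB.symm.mono (hu2 ▸ Finset.subset_biUnion_of_mem id h)
        (hu1 ▸ Finset.subset_biUnion_of_mem id h')
    · exact hd2 S h S' h' hne
  · rw [← hu1, ← hu2]; ext a; simp [Finset.mem_biUnion, Finset.mem_union]; aesop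

lemma perf_mem_le {A : Finset (Fin n)} {a : Fin n} (h : PerfTilingOn F G A)
    (ha : a ∈ A) : k ≤ A.card := by
  obtain ⟨T, ⟨hc, -⟩, hu⟩ := h
  rw [← hu] at ha
  obtain ⟨S, hS, haS⟩ := Finset.mem_biUnion.mp ha
  have h1 : S ⊆ A := hu ▸ Finset.subset_biUnion_of_mem id hS
  have := spans_card (hc S hS)
  calc k = S.card := this.symm
    _ ≤ A.card := Finset.card_le_card h1


lemma part_unique {C : ℕ} {P : Fin C → Finset (Fin n)} (hP : IsPartition P)
    {a : Fin n} {l l' : Fin C} (h : a ∈ P l) (h' : a ∈ P l') : l = l' := by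
  by_contra hne
  exact Finset.disjoint_left.mp (hP.1 l l' hne) h h'


lemma chain {C : ℕ} {P : Fin C → Finset (Fin n)} (hP : IsPartition P) {β : ℝ} {t : ℕ}
    (hcl : ∀ i, FClosed F G (β * n) t (P i)) :
    ∀ r : ℕ, ∀ A B W : Finset (Fin n), A.card = r → B.card = r → Disjoint A B →
    (∀ l, (A ∩ P l).card = (B ∩ P l).card) →
    (W.card : ℝ) + r * ((k : ℝ) * t + 2) ≤ β * n →
    ∃ S : Finset (Fin n), Disjoint S (W ∪ A ∪ B) ∧ S.card ≤ r * (k * t) ∧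
      PerfTilingOn F G (S ∪ A) ∧ PerfTilingOn F G (S ∪ B) := by
  intro r
  induction r with
  | zero =>
    intro A B W hA hB _ _ _
    rw [Finset.card_eq_zero] at hA hB
    subst hA; subst hB
    exact ⟨∅, by simp, by simp, by simpa using (perf_empty (F := F) (G := G)),
      by simpa using (perf_empty (F := F) (G := G))⟩
  | succ r ih =>
    intro A B W hA hB hAB hidx hW
    -- pick z ∈ A
    have hAne : A.Nonempty := Finset.card_pos.mp (by omega)
    obtain ⟨z, hzA⟩ := hAne
    -- find the part of z
    have hz' : z ∈ Finset.univ.biUnion P := hP.2 ▸ Finset.mem_univ z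
    obtain ⟨l, -, hzl⟩ := Finset.mem_biUnion.mp hz'
    -- pick w ∈ B ∩ P l
    have hBl : 0 < (B ∩ P l).card := by
      rw [← hidx l]
      exact Finset.card_pos.mpr ⟨z, Finset.mem_inter.mpr ⟨hzA, hzl⟩⟩
    obtain ⟨w, hw⟩ := Finset.card_pos.mp hBl
    obtain ⟨hwB, hwl⟩ := Finset.mem_inter.mp hw
    have hzw : z ≠ w := fun h => Finset.disjoint_left.mp hAB hzA (h ▸ hwB)
    -- reach z ~ w avoiding W ∪ A ∪ B
    have hcard1 : ((W ∪ A ∪ B).card : ℝ) ≤ β * n := by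
      have h1 : (W ∪ A ∪ B).card ≤ W.card + (r + 1) + (r + 1) := by
        calc (W ∪ A ∪ B).card ≤ (W ∪ A).card + B.card := Finset.card_union_le _ _
          _ ≤ W.card + A.card + B.card := by
              have := Finset.card_union_le W A; omega
          _ = W.card + (r + 1) + (r + 1) := by omega
      have h2 : ((W ∪ A ∪ B).card : ℝ) ≤ (W.card : ℝ) + (r + 1) + (r + 1) := by
        exact_mod_cast h1
      have hkt : (0 : ℝ) ≤ (k : ℝ) * t := by positivity
      have hr1 : (0 : ℝ) ≤ ((r : ℝ) + 1) := by positivity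
      push_cast at hW h2 ⊢
      nlinarith [hW]
    obtain ⟨Sz, hSzd, hzSz, hwSz, hSzc, hSztz, hSztw⟩ :=
      hcl l z hzl w hwl hzw (W ∪ A ∪ B) hcard1
    -- recurse on A.erase z, B.erase w with W'' := W ∪ Sz ∪ {z, w}
    have hA' : (A.erase z).card = r := by rw [Finset.card_erase_of_mem hzA, hA]; omega
    have hB' : (B.erase w).card = r := by rw [Finset.card_erase_of_mem hwB, hB]; omega
    have hAB' : Disjoint (A.erase z) (B.erase w) :=
      hAB.mono (Finset.erase_subset _ _) (Finset.erase_subset _ _)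
    have hidx' : ∀ l', ((A.erase z) ∩ P l').card = ((B.erase w) ∩ P l').card := by
      intro l'
      have eA : (A.erase z) ∩ P l' = (A ∩ P l').erase z := by
        ext a; simp only [Finset.mem_erase, Finset.mem_inter]; tauto
      have eB : (B.erase w) ∩ P l' = (B ∩ P l').erase w := by
        ext a; simp only [Finset.mem_erase, Finset.mem_inter]; tauto
      rw [eA, eB]
      by_cases hl : l' = l
      · subst hl
        rw [Finset.card_erase_of_mem (Finset.mem_inter.mpr ⟨hzA, hzl⟩),
          Finset.card_erase_of_mem (Finset.mem_inter.mpr ⟨hwB, hwl⟩), hidx]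
      · have hwn : w ∉ P l' := fun h => hl ((part_unique hP h hwl))
        have hzn : z ∉ P l' := fun h => hl ((part_unique hP h hzl))
        rw [Finset.erase_eq_of_notMem (fun h => hzn (Finset.mem_inter.mp h).2),
          Finset.erase_eq_of_notMem (fun h => hwn (Finset.mem_inter.mp h).2), hidx]
    have hWcard : (((W ∪ Sz ∪ {z, w}).card : ℝ)) + r * ((k : ℝ) * t + 2) ≤ β * n := by
      have h1 : (W ∪ Sz ∪ {z, w}).card ≤ W.card + Sz.card + 2 := by
        have e1 := Finset.card_union_le (W ∪ Sz) ({z, w} : Finset (Fin n))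
        have e2 := Finset.card_union_le W Sz
        have e3 : ({z, w} : Finset (Fin n)).card ≤ 2 :=
          (Finset.card_insert_le _ _).trans (by simp)
        omega
      have h2 : Sz.card ≤ k * t := le_trans hSzc (Nat.sub_le _ _)
      have h3 : (W ∪ Sz ∪ {z, w}).card ≤ W.card + k * t + 2 := by omega
      have h4 : (((W ∪ Sz ∪ {z, w}).card : ℝ)) ≤ (W.card : ℝ) + (k : ℝ) * t + 2 := by
        exact_mod_cast h3
      push_cast at hW h4 ⊢
      nlinarith [hW]
    obtain ⟨S', hS'd, hS'c, hS'A, hS'B⟩ :=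
      ih (A.erase z) (B.erase w) (W ∪ Sz ∪ {z, w}) hA' hB' hAB' hidx' hWcard
    -- atoms for S'
    have hS'W : Disjoint S' W := hS'd.mono_right (by intro a ha; simp [Finset.mem_union]; tauto)
    have hS'Sz : Disjoint S' Sz := hS'd.mono_right (by intro a ha; simp [Finset.mem_union]; tauto)
    have hzS' : z ∉ S' := fun h =>
      Finset.disjoint_left.mp hS'd h (by simp [Finset.mem_union])
    have hwS' : w ∉ S' := fun h =>
      Finset.disjoint_left.mp hS'd h (by simp [Finset.mem_union])
    have hS'A' : Disjoint S' (A.erase z) := hS'd.mono_right (by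
      intro a ha; simp only [Finset.mem_union]; tauto)
    have hS'B' : Disjoint S' (B.erase w) := hS'd.mono_right (by
      intro a ha; simp only [Finset.mem_union]; tauto)
    -- atoms for Sz
    have hSzW : Disjoint Sz W := hSzd.mono_right (by intro a ha; simp [Finset.mem_union]; tauto)
    have hSzA : Disjoint Sz A := hSzd.mono_right (by intro a ha; simp [Finset.mem_union]; tauto)
    have hSzB : Disjoint Sz B := hSzd.mono_right (by intro a ha; simp [Finset.mem_union]; tauto)
    have hS'A2 : Disjoint S' A := by
      rw [Finset.disjoint_left]
      intro a ha hA2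
      exact Finset.disjoint_left.mp hS'A' ha
        (Finset.mem_erase.mpr ⟨fun h => hzS' (h ▸ ha), hA2⟩)
    have hS'B2 : Disjoint S' B := by
      rw [Finset.disjoint_left]
      intro a ha hB2
      exact Finset.disjoint_left.mp hS'B' ha
        (Finset.mem_erase.mpr ⟨fun h => hwS' (h ▸ ha), hB2⟩)
    refine ⟨Sz ∪ S', ?_, ?_, ?_, ?_⟩
    · rw [Finset.disjoint_union_left]
      refine ⟨hSzd, ?_⟩
      rw [Finset.disjoint_union_right, Finset.disjoint_union_right]
      exact ⟨⟨hS'W, hS'A2⟩, hS'B2⟩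
    · calc (Sz ∪ S').card ≤ Sz.card + S'.card := Finset.card_union_le _ _
        _ ≤ k * t + r * (k * t) := Nat.add_le_add (hSzc.trans (Nat.sub_le _ _)) hS'c
        _ = (r + 1) * (k * t) := by ring
    · have dj2 : Disjoint (insert z Sz) (S' ∪ A.erase z) := by
        rw [Finset.disjoint_union_right, Finset.disjoint_insert_left,
          Finset.disjoint_insert_left]
        exact ⟨⟨hzS', hS'Sz.symm⟩,
          ⟨Finset.notMem_erase _ _, hSzA.mono_right (Finset.erase_subset _ _)⟩⟩
      have h1 := tiling_union hSztz hS'A dj2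
      rwa [Finset.insert_union, ← Finset.union_assoc, ← Finset.union_insert,
        Finset.insert_erase hzA] at h1
    · have dj2 : Disjoint (insert w Sz) (S' ∪ B.erase w) := by
        rw [Finset.disjoint_union_right, Finset.disjoint_insert_left,
          Finset.disjoint_insert_left]
        exact ⟨⟨hwS', hS'Sz.symm⟩,
          ⟨Finset.notMem_erase _ _, hSzB.mono_right (Finset.erase_subset _ _)⟩⟩
      have h1 := tiling_union hSztw hS'B dj2
      rwa [Finset.insert_union, ← Finset.union_assoc, ← Finset.union_insert,
        Finset.insert_erase hwB] at h1

set_option maxHeartbeats 4000000 in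
lemma reach_main {C : ℕ} {P : Fin C → Finset (Fin n)} (hP : IsPartition P)
    {β : ℝ} {t : ℕ} (hk : 3 ≤ k)
    (hn : (2 + 2 * (k : ℝ) + 2 * (k : ℝ) * t + (k : ℝ) * ((k : ℝ) * t + 2)) ≤ β / 2 * n)
    (hcl : ∀ i, FClosed F G (β * n) t (P i))
    {i j : Fin C} (hij : i ≠ j) {s t' : Fin C → ℕ}
    (hs : RobustVec F G P β s) (ht : RobustVec F G P β t')
    (hst : ∀ l, (s l : ℤ) - (t' l : ℤ) =
      (if l = i then 1 else 0) - (if l = j then 1 else 0))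
    {u v : Fin n} (hu : u ∈ P i) (hv : v ∈ P j) :
    FReachable F G (β / 2 * n) (2 * k * t) u v := by
  intro W hW
  have hK : (0:ℝ) ≤ (k:ℝ) := Nat.cast_nonneg k
  have hT : (0:ℝ) ≤ (t:ℝ) := Nat.cast_nonneg t
  have hKT : (0:ℝ) ≤ (k:ℝ) * t := by positivity
  have hKKT : (0:ℝ) ≤ (k:ℝ) * ((k:ℝ) * t + 2) := by positivity
  have hhalf : β / 2 * n + (2 + 2 * (k : ℝ) + 2 * (k : ℝ) * t
      + (k : ℝ) * ((k : ℝ) * t + 2)) ≤ β * n := by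
    have e : β * n = β / 2 * n + β / 2 * n := by ring
    linarith [hn]
  -- first robust copy
  have hWa : (((W ∪ {u, v}).card : ℝ)) ≤ β * n := by
    have h1 : (W ∪ {u, v}).card ≤ W.card + 2 := by
      have e1 := Finset.card_union_le W ({u, v} : Finset (Fin n))
      have e2 : ({u, v} : Finset (Fin n)).card ≤ 2 :=
        (Finset.card_insert_le _ _).trans (by simp)
      omega
    have h2 : (((W ∪ {u, v}).card : ℝ)) ≤ (W.card : ℝ) + 2 := by exact_mod_cast h1
    linarith [hW]
  obtain ⟨Ss, hSsd, hSsc, hSsi⟩ := hs.2 (W ∪ {u, v}) hWa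
  have hSscard : Ss.card = k := spans_card hSsc
  have hSsW : Disjoint Ss W := hSsd.mono_right Finset.subset_union_left
  have huSs : u ∉ Ss := fun h => Finset.disjoint_left.mp hSsd h (by simp)
  have hvSs : v ∉ Ss := fun h => Finset.disjoint_left.mp hSsd h (by simp)
  -- second robust copy
  have hWb : (((W ∪ {u, v} ∪ Ss).card : ℝ)) ≤ β * n := by
    have h1 : (W ∪ {u, v} ∪ Ss).card ≤ W.card + 2 + k := by
      have e1 := Finset.card_union_le (W ∪ {u, v}) Ss
      have e2 := Finset.card_union_le W ({u, v} : Finset (Fin n))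
      have e3 : ({u, v} : Finset (Fin n)).card ≤ 2 :=
        (Finset.card_insert_le _ _).trans (by simp)
      omega
    have h2 : (((W ∪ {u, v} ∪ Ss).card : ℝ)) ≤ (W.card : ℝ) + 2 + k := by exact_mod_cast h1
    linarith [hW]
  obtain ⟨St, hStd, hStc, hSti⟩ := ht.2 (W ∪ {u, v} ∪ Ss) hWb
  have hStcard : St.card = k := spans_card hStc
  have hStW : Disjoint St W := hStd.mono_right (by
    intro a ha; simp only [Finset.mem_union]; tauto)
  have huSt : u ∉ St := fun h => Finset.disjoint_left.mp hStd h (by simp)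
  have hvSt : v ∉ St := fun h => Finset.disjoint_left.mp hStd h (by simp)
  have hStSs : Disjoint St Ss := hStd.mono_right (by
    intro a ha; simp only [Finset.mem_union]; tauto)
  -- coordinates
  have hsi : s i = t' i + 1 := by
    have h1 := hst i
    rw [if_pos rfl, if_neg hij] at h1
    omega
  have htj : t' j = s j + 1 := by
    have h1 := hst j
    rw [if_neg (Ne.symm hij), if_pos rfl] at h1
    omega
  have hstl : ∀ l, l ≠ i → l ≠ j → s l = t' l := by
    intro l h1 h2
    have h3 := hst l
    rw [if_neg h1, if_neg h2] at h3
    omega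
  -- pick x and y
  obtain ⟨x, hx⟩ : (Ss ∩ P i).Nonempty := by
    rw [← Finset.card_pos, hSsi i]; omega
  obtain ⟨hxSs, hxPi⟩ := Finset.mem_inter.mp hx
  obtain ⟨y, hy⟩ : (St ∩ P j).Nonempty := by
    rw [← Finset.card_pos, hSti j]; omega
  obtain ⟨hySt, hyPj⟩ := Finset.mem_inter.mp hy
  have hux : u ≠ x := fun h => huSs (h ▸ hxSs)
  have hvy : v ≠ y := fun h => hvSt (h ▸ hySt)
  -- connect u ~ x
  have hW1 : (((W ∪ {u, v} ∪ Ss ∪ St).card : ℝ)) ≤ β * n := by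
    have h1 : (W ∪ {u, v} ∪ Ss ∪ St).card ≤ W.card + 2 + k + k := by
      have e1 := Finset.card_union_le (W ∪ {u, v} ∪ Ss) St
      have e2 := Finset.card_union_le (W ∪ {u, v}) Ss
      have e3 := Finset.card_union_le W ({u, v} : Finset (Fin n))
      have e4 : ({u, v} : Finset (Fin n)).card ≤ 2 :=
        (Finset.card_insert_le _ _).trans (by simp)
      omega
    have h2 : (((W ∪ {u, v} ∪ Ss ∪ St).card : ℝ)) ≤ (W.card : ℝ) + 2 + k + k := by
      exact_mod_cast h1
    linarith [hW]
  obtain ⟨S1, hS1d, huS1, hxS1, hS1c, hS1tu, hS1tx⟩ :=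
    hcl i u hu x hxPi hux (W ∪ {u, v} ∪ Ss ∪ St) hW1
  -- dispatch t = 0
  rcases Nat.eq_zero_or_pos t with ht0 | htpos
  · exfalso
    subst ht0
    have hS10 : S1 = ∅ := by simpa using hS1c
    subst hS10
    have h2 := perf_mem_le hS1tu (Finset.mem_insert_self u ∅)
    simp at h2
    omega
  -- atoms for S1
  have dS1W : Disjoint S1 W := hS1d.mono_right (by
    intro a ha; simp only [Finset.mem_union]; tauto)
  have hvS1 : v ∉ S1 := fun h => Finset.disjoint_left.mp hS1d h (by simp)
  have dS1Ss : Disjoint S1 Ss := hS1d.mono_right (by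
    intro a ha; simp only [Finset.mem_union]; tauto)
  have dS1St : Disjoint S1 St := hS1d.mono_right (by
    intro a ha; simp only [Finset.mem_union]; tauto)
  have hyS1 : y ∉ S1 := fun h => Finset.disjoint_left.mp dS1St h hySt
  -- connect v ~ y
  have hW2 : (((W ∪ {u, v} ∪ Ss ∪ St ∪ S1).card : ℝ)) ≤ β * n := by
    have h1 : (W ∪ {u, v} ∪ Ss ∪ St ∪ S1).card ≤ W.card + 2 + k + k + k * t := by
      have e0 := Finset.card_union_le (W ∪ {u, v} ∪ Ss ∪ St) S1
      have e1 := Finset.card_union_le (W ∪ {u, v} ∪ Ss) St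
      have e2 := Finset.card_union_le (W ∪ {u, v}) Ss
      have e3 := Finset.card_union_le W ({u, v} : Finset (Fin n))
      have e4 : ({u, v} : Finset (Fin n)).card ≤ 2 :=
        (Finset.card_insert_le _ _).trans (by simp)
      have e5 : S1.card ≤ k * t := hS1c.trans (Nat.sub_le _ _)
      omega
    have h2 : (((W ∪ {u, v} ∪ Ss ∪ St ∪ S1).card : ℝ))
        ≤ (W.card : ℝ) + 2 + k + k + (k : ℝ) * t := by exact_mod_cast h1
    linarith [hW]
  obtain ⟨S2, hS2d, hvS2, hyS2, hS2c, hS2tv, hS2ty⟩ :=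
    hcl j v hv y hyPj hvy (W ∪ {u, v} ∪ Ss ∪ St ∪ S1) hW2
  -- atoms for S2
  have dS2W : Disjoint S2 W := hS2d.mono_right (by
    intro a ha; simp only [Finset.mem_union]; tauto)
  have huS2 : u ∉ S2 := fun h => Finset.disjoint_left.mp hS2d h (by simp)
  have dS2Ss : Disjoint S2 Ss := hS2d.mono_right (by
    intro a ha; simp only [Finset.mem_union]; tauto)
  have dS2St : Disjoint S2 St := hS2d.mono_right (by
    intro a ha; simp only [Finset.mem_union]; tauto)
  have dS2S1 : Disjoint S2 S1 := hS2d.mono_right (by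
    intro a ha; simp only [Finset.mem_union]; tauto)
  have hxS2 : x ∉ S2 := fun h => Finset.disjoint_left.mp dS2Ss h hxSs
  -- the chain on Ss.erase x, St.erase y
  have hAcard : (Ss.erase x).card = k - 1 := by
    rw [Finset.card_erase_of_mem hxSs, hSscard]
  have hBcard : (St.erase y).card = k - 1 := by
    rw [Finset.card_erase_of_mem hySt, hStcard]
  have hABd : Disjoint (Ss.erase x) (St.erase y) :=
    hStSs.symm.mono (Finset.erase_subset _ _) (Finset.erase_subset _ _)
  have hidx : ∀ l, ((Ss.erase x) ∩ P l).card = ((St.erase y) ∩ P l).card := by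
    intro l
    have eA : (Ss.erase x) ∩ P l = (Ss ∩ P l).erase x := by
      ext a; simp only [Finset.mem_erase, Finset.mem_inter]; tauto
    have eB : (St.erase y) ∩ P l = (St ∩ P l).erase y := by
      ext a; simp only [Finset.mem_erase, Finset.mem_inter]; tauto
    rw [eA, eB]
    by_cases hli : l = i
    · subst hli
      have hyn : y ∉ St ∩ P l := fun h =>
        hij (part_unique hP (Finset.mem_inter.mp h).2 hyPj)
      rw [Finset.card_erase_of_mem (Finset.mem_inter.mpr ⟨hxSs, hxPi⟩),
        Finset.erase_eq_of_notMem hyn, hSsi, hSti, hsi]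
      omega
    · by_cases hlj : l = j
      · subst hlj
        have hxn : x ∉ Ss ∩ P l := fun h =>
          hli (part_unique hP (Finset.mem_inter.mp h).2 hxPi)
        rw [Finset.erase_eq_of_notMem hxn,
          Finset.card_erase_of_mem (Finset.mem_inter.mpr ⟨hySt, hyPj⟩), hSsi, hSti, htj]
        omega
      · have hxn : x ∉ Ss ∩ P l := fun h =>
          hli (part_unique hP (Finset.mem_inter.mp h).2 hxPi)
        have hyn : y ∉ St ∩ P l := fun h =>
          hlj (part_unique hP (Finset.mem_inter.mp h).2 hyPj)
        rw [Finset.erase_eq_of_notMem hxn, Finset.erase_eq_of_notMem hyn,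
          hSsi, hSti, hstl l hli hlj]
  have hWc : (((W ∪ {u, v} ∪ Ss ∪ St ∪ S1 ∪ S2).card : ℝ))
      + ((k - 1 : ℕ) : ℝ) * ((k : ℝ) * t + 2) ≤ β * n := by
    have h1 : (W ∪ {u, v} ∪ Ss ∪ St ∪ S1 ∪ S2).card
        ≤ W.card + 2 + k + k + k * t + k * t := by
      have e00 := Finset.card_union_le (W ∪ {u, v} ∪ Ss ∪ St ∪ S1) S2
      have e0 := Finset.card_union_le (W ∪ {u, v} ∪ Ss ∪ St) S1
      have e1 := Finset.card_union_le (W ∪ {u, v} ∪ Ss) St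
      have e2 := Finset.card_union_le (W ∪ {u, v}) Ss
      have e3 := Finset.card_union_le W ({u, v} : Finset (Fin n))
      have e4 : ({u, v} : Finset (Fin n)).card ≤ 2 :=
        (Finset.card_insert_le _ _).trans (by simp)
      have e5 : S1.card ≤ k * t := hS1c.trans (Nat.sub_le _ _)
      have e6 : S2.card ≤ k * t := hS2c.trans (Nat.sub_le _ _)
      omega
    have h2 : (((W ∪ {u, v} ∪ Ss ∪ St ∪ S1 ∪ S2).card : ℝ))
        ≤ (W.card : ℝ) + 2 + k + k + (k : ℝ) * t + (k : ℝ) * t := by exact_mod_cast h1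
    have h3 : ((k - 1 : ℕ) : ℝ) ≤ (k : ℝ) := by
      exact_mod_cast Nat.cast_le.mpr (Nat.sub_le k 1)
    have h4 : ((k - 1 : ℕ) : ℝ) * ((k : ℝ) * t + 2) ≤ (k : ℝ) * ((k : ℝ) * t + 2) := by
      apply mul_le_mul_of_nonneg_right h3; positivity
    linarith [hW]
  obtain ⟨S3, hS3d, hS3c, hS3A, hS3B⟩ :=
    chain hP hcl (k - 1) (Ss.erase x) (St.erase y) (W ∪ {u, v} ∪ Ss ∪ St ∪ S1 ∪ S2)
      hAcard hBcard hABd hidx hWc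
  -- atoms for S3
  have dS3W : Disjoint S3 W := hS3d.mono_right (by
    intro a ha; simp only [Finset.mem_union]; tauto)
  have huS3 : u ∉ S3 := fun h => Finset.disjoint_left.mp hS3d h (by simp)
  have hvS3 : v ∉ S3 := fun h => Finset.disjoint_left.mp hS3d h (by simp)
  have dS3Ss : Disjoint S3 Ss := hS3d.mono_right (by
    intro a ha; simp only [Finset.mem_union]; tauto)
  have dS3St : Disjoint S3 St := hS3d.mono_right (by
    intro a ha; simp only [Finset.mem_union]; tauto)
  have dS3S1 : Disjoint S3 S1 := hS3d.mono_right (by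
    intro a ha; simp only [Finset.mem_union]; tauto)
  have dS3S2 : Disjoint S3 S2 := hS3d.mono_right (by
    intro a ha; simp only [Finset.mem_union]; tauto)
  have hyS3 : y ∉ S3 := fun h => Finset.disjoint_left.mp dS3St h hySt
  have hxS3 : x ∉ S3 := fun h => Finset.disjoint_left.mp dS3Ss h hxSs
  -- assemble
  refine ⟨S1 ∪ S2 ∪ S3 ∪ Ss ∪ St, ?_, ?_, ?_, ?_, ?_, ?_⟩
  · simp only [Finset.disjoint_union_left]
    exact ⟨⟨⟨⟨dS1W, dS2W⟩, dS3W⟩, hSsW⟩, hStW⟩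
  · simp only [Finset.mem_union]
    push_neg
    exact ⟨⟨⟨⟨huS1, huS2⟩, huS3⟩, huSs⟩, huSt⟩
  · simp only [Finset.mem_union]
    push_neg
    exact ⟨⟨⟨⟨hvS1, hvS2⟩, hvS3⟩, hvSs⟩, hvSt⟩
  · -- cardinality
    have hcard : (S1 ∪ S2 ∪ S3 ∪ Ss ∪ St).card
        ≤ S1.card + S2.card + S3.card + Ss.card + St.card := by
      have e1 := Finset.card_union_le (S1 ∪ S2 ∪ S3 ∪ Ss) St
      have e2 := Finset.card_union_le (S1 ∪ S2 ∪ S3) Ss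
      have e3 := Finset.card_union_le (S1 ∪ S2) S3
      have e4 := Finset.card_union_le S1 S2
      omega
    have e1 : (k - 1) * (k * t) = k * (k * t) - 1 * (k * t) := by rw [Nat.sub_mul]
    rw [one_mul] at e1
    rw [e1] at hS3c
    have e2 : k * (2 * k * t) = 2 * (k * (k * t)) := by ring
    rw [e2]
    have h3a : 3 * (k * t) ≤ k * (k * t) := Nat.mul_le_mul_right _ hk
    have hkle : k ≤ k * t := Nat.le_mul_of_pos_right k htpos
    set a := k * t with ha
    set b := k * a with hb
    omega
  · -- tiling of insert u S
    have dj1 : Disjoint (insert y S2) (S3 ∪ St.erase y) := by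
      rw [Finset.disjoint_union_right, Finset.disjoint_insert_left,
        Finset.disjoint_insert_left]
      exact ⟨⟨hyS3, dS3S2.symm⟩, ⟨Finset.notMem_erase _ _,
        dS2St.mono_right (Finset.erase_subset _ _)⟩⟩
    have T2 := tiling_union hS2ty hS3B dj1
    have dj2 : Disjoint Ss (insert y S2 ∪ (S3 ∪ St.erase y)) := by
      rw [Finset.disjoint_union_right, Finset.disjoint_union_right,
        Finset.disjoint_insert_right]
      exact ⟨⟨fun h => Finset.disjoint_left.mp hStSs hySt h, dS2Ss.symm⟩,
        dS3Ss.symm, hStSs.symm.mono_right (Finset.erase_subset _ _)⟩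
    have T3 := tiling_union (spans_perf hSsc) T2 dj2
    have dj3 : Disjoint (insert u S1) (Ss ∪ (insert y S2 ∪ (S3 ∪ St.erase y))) := by
      rw [Finset.disjoint_insert_left, Finset.disjoint_union_right,
        Finset.disjoint_union_right, Finset.disjoint_union_right,
        Finset.disjoint_insert_right]
      refine ⟨?_, dS1Ss, ⟨⟨hyS1, dS2S1.symm⟩, dS3S1.symm,
        dS1St.mono_right (Finset.erase_subset _ _)⟩⟩
      simp only [Finset.mem_union, Finset.mem_insert, Finset.mem_erase]
      push_neg
      exact ⟨huSs, ⟨fun h => huSt (h ▸ hySt), huS2⟩, huS3, fun _ => huSt⟩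
    have T4 := tiling_union hS1tu T3 dj3
    have heq : (insert u S1) ∪ (Ss ∪ (insert y S2 ∪ (S3 ∪ St.erase y)))
        = insert u (S1 ∪ S2 ∪ S3 ∪ Ss ∪ St) := by
      ext a
      by_cases hay : a = y <;> by_cases hau : a = u <;>
        simp only [Finset.mem_union, Finset.mem_insert, Finset.mem_erase, hay, hau,
          hySt, not_true, not_false_iff, true_and, false_and, true_or, or_true,
          eq_self_iff_true] <;> tauto
    rwa [heq] at T4
  · -- tiling of insert v S
    have dj1 : Disjoint (insert x S1) (S3 ∪ Ss.erase x) := by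
      rw [Finset.disjoint_union_right, Finset.disjoint_insert_left,
        Finset.disjoint_insert_left]
      exact ⟨⟨hxS3, dS3S1.symm⟩, ⟨Finset.notMem_erase _ _,
        dS1Ss.mono_right (Finset.erase_subset _ _)⟩⟩
    have T2 := tiling_union hS1tx hS3A dj1
    have dj2 : Disjoint St (insert x S1 ∪ (S3 ∪ Ss.erase x)) := by
      rw [Finset.disjoint_union_right, Finset.disjoint_union_right,
        Finset.disjoint_insert_right]
      exact ⟨⟨fun h => Finset.disjoint_left.mp hStSs h hxSs, dS1St.symm⟩,
        dS3St.symm, hStSs.mono_right (Finset.erase_subset _ _)⟩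
    have T3 := tiling_union (spans_perf hStc) T2 dj2
    have dj3 : Disjoint (insert v S2) (St ∪ (insert x S1 ∪ (S3 ∪ Ss.erase x))) := by
      rw [Finset.disjoint_insert_left, Finset.disjoint_union_right,
        Finset.disjoint_union_right, Finset.disjoint_union_right,
        Finset.disjoint_insert_right]
      refine ⟨?_, dS2St, ⟨⟨hxS2, dS2S1⟩, dS3S2.symm,
        dS2Ss.mono_right (Finset.erase_subset _ _)⟩⟩
      simp only [Finset.mem_union, Finset.mem_insert, Finset.mem_erase]
      push_neg
      exact ⟨hvSt, ⟨fun h => hvSs (h ▸ hxSs), hvS1⟩, hvS3, fun _ => hvSs⟩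
    have T4 := tiling_union hS2tv T3 dj3
    have heq : (insert v S2) ∪ (St ∪ (insert x S1 ∪ (S3 ∪ Ss.erase x)))
        = insert v (S1 ∪ S2 ∪ S3 ∪ Ss ∪ St) := by
      ext a
      by_cases hax : a = x <;> by_cases hav : a = v <;>
        simp only [Finset.mem_union, Finset.mem_insert, Finset.mem_erase, hax, hav,
          hxSs, not_true, not_false_iff, true_and, false_and, true_or, or_true,
          eq_self_iff_true] <;> tauto
    rwa [heq] at T4

end RTT

open RTT in
/-- Transferral lemma: if two robust `k`-vectors differ by `u_i - u_j`,
then the union of the closed parts `V_i` and `V_j` is `(F,(β/2)n,2kt)`-closed. -/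
theorem transferral :
    ∀ k t : ℕ, 3 ≤ k → ∀ β : ℝ, 0 < β →
    ∃ N : ℕ, ∀ n : ℕ, N ≤ n →
      ∀ F : SimpleGraph (Fin k), ∀ G : SimpleGraph (Fin n),
      ∀ C : ℕ, ∀ P : Fin C → Finset (Fin n), IsPartition P →
        (∀ i, FClosed F G (β * n) t (P i)) →
        ∀ i j : Fin C, i ≠ j →
        ∀ s t' : Fin C → ℕ,
          RobustVec F G P β s → RobustVec F G P β t' →
          (∀ l : Fin C, (s l : ℤ) - (t' l : ℤ) =
            (if l = i then 1 else 0) - (if l = j then 1 else 0)) →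
          FClosed F G ((β / 2) * n) (2 * k * t) (P i ∪ P j) := by
  intro k t hk β hβ
  refine ⟨⌈2 * (2 + 2 * (k : ℝ) + 2 * (k : ℝ) * t + (k : ℝ) * ((k : ℝ) * t + 2)) / β⌉₊,
    ?_⟩
  intro n hn F G C P hP hcl i j hij s t' hs ht hst
  have hDnn : (0 : ℝ) ≤ 2 + 2 * (k : ℝ) + 2 * (k : ℝ) * t + (k : ℝ) * ((k : ℝ) * t + 2) := by
    positivity
  have hn' : (2 + 2 * (k : ℝ) + 2 * (k : ℝ) * t + (k : ℝ) * ((k : ℝ) * t + 2))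
      ≤ β / 2 * n := by
    have h1 : 2 * (2 + 2 * (k : ℝ) + 2 * (k : ℝ) * t + (k : ℝ) * ((k : ℝ) * t + 2)) / β
        ≤ (n : ℝ) := by
      calc _ ≤ ((⌈2 * (2 + 2 * (k : ℝ) + 2 * (k : ℝ) * t
            + (k : ℝ) * ((k : ℝ) * t + 2)) / β⌉₊ : ℕ) : ℝ) := Nat.le_ceil _
        _ ≤ (n : ℝ) := Nat.cast_le.mpr hn
    have h2 := mul_le_mul_of_nonneg_left h1 (le_of_lt (half_pos hβ))
    rw [mul_div_assoc'] at h2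
    have h3 : β / 2 * (2 * (2 + 2 * (k : ℝ) + 2 * (k : ℝ) * t
        + (k : ℝ) * ((k : ℝ) * t + 2))) / β
        = 2 + 2 * (k : ℝ) + 2 * (k : ℝ) * t + (k : ℝ) * ((k : ℝ) * t + 2) := by
      field_simp
    rw [h3] at h2
    exact h2
  have hmono : β / 2 * n ≤ β * n := by nlinarith [Nat.cast_nonneg (α := ℝ) n]
  have hweak : ∀ l : Fin C, ∀ u ∈ P l, ∀ v ∈ P l, u ≠ v →
      FReachable F G (β / 2 * n) (2 * k * t) u v := by
    intro l u hu v hv huv W hW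
    obtain ⟨S, h1, h2, h3, h4, h5, h6⟩ := hcl l u hu v hv huv W (hW.trans hmono)
    refine ⟨S, h1, h2, h3, ?_, h5, h6⟩
    refine h4.trans (Nat.sub_le_sub_right ?_ 1)
    exact Nat.mul_le_mul_left k (Nat.le_mul_of_pos_left t (by omega))
  intro u hu v hv huv
  rcases Finset.mem_union.mp hu with hui | huj <;>
    rcases Finset.mem_union.mp hv with hvi | hvj
  · exact hweak i u hui v hvi huv
  · exact reach_main hP hk hn' hcl hij hs ht hst hui hvj
  · have hst' : ∀ l : Fin C, (t' l : ℤ) - (s l : ℤ) =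
        (if l = j then 1 else 0) - (if l = i then 1 else 0) := by
      intro l
      have h1 := hst l
      by_cases h2 : l = i
      · have hlj : l ≠ j := fun hh => hij (h2.symm.trans hh)
        rw [if_pos h2, if_neg hlj] at h1
        rw [if_neg hlj, if_pos h2]
        omega
      · by_cases h3 : l = j
        · rw [if_neg h2, if_pos h3] at h1
          rw [if_pos h3, if_neg h2]
          omega
        · rw [if_neg h2, if_neg h3] at h1
          rw [if_neg h3, if_neg h2]
          omega
    exact reach_main hP hk hn' hcl (Ne.symm hij) ht hs hst' huj hvi
  · exact hweak j u huj v hvj huv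
end

section
/- For any constant α > 0 and any integer k ≥ 3, the following holds for all sufficiently large n ∈ ℕ: there exists an n-vertex graph G with α*(G) < αn and girth greater than k (that is, G contains no cycle of length at most k). -/
open Finset

namespace HG

variable {M B ℓ : ℕ}

def pairup {M : ℕ} (a b : Fin M) : Fin M × Fin M := if a ≤ b then (a, b) else (b, a)

lemma pairup_comm (a b : Fin M) : pairup a b = pairup b a := by
  unfold pairup
  split_ifs with h1 h2 h2
  · have := le_antisymm h1 h2; subst this; rfl
  · rfl
  · rfl
  · rcases le_total a b with h | h <;> tauto

lemma pairup_eq {a b c d : Fin M} (h : pairup a b = pairup c d) :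
    (a = c ∧ b = d) ∨ (a = d ∧ b = c) := by
  unfold pairup at h
  split_ifs at h <;> simp only [Prod.mk.injEq] at h <;> tauto

def graphOf (f : Fin M × Fin M → Fin (B + 1)) : SimpleGraph (Fin M) where
  Adj x y := x ≠ y ∧ f (pairup x y) = 0
  symm := ⟨by intro x y hxy; exact ⟨Ne.symm hxy.1, by rw [pairup_comm]; exact hxy.2⟩⟩
  loopless := ⟨by intro x hx; exact hx.1 rfl⟩

lemma graphOf_adj {f : Fin M × Fin M → Fin (B + 1)} {x y : Fin M} :
    (graphOf f).Adj x y ↔ x ≠ y ∧ f (pairup x y) = 0 := Iff.rfl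

def nxt (i : Fin ℓ) : Fin ℓ := ⟨(i.1 + 1) % ℓ, Nat.mod_lt _ i.pos⟩

def IsCyc (G : SimpleGraph (Fin M)) (t : Fin ℓ → Fin M) : Prop :=
  Function.Injective t ∧ ∀ i, G.Adj (t i) (t (nxt i))

lemma count_event {ι : Type*} [Fintype ι] [DecidableEq ι] (P : Finset ι)
    (S : Finset (Fin (B + 1))) :
    (univ.filter (fun f : ι → Fin (B + 1) => ∀ c ∈ P, f c ∈ S)).card
      = S.card ^ P.card * (B + 1) ^ (Fintype.card ι - P.card) := by
  have h1 : univ.filter (fun f : ι → Fin (B + 1) => ∀ c ∈ P, f c ∈ S)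
      = Fintype.piFinset (fun c => if c ∈ P then S else univ) := by
    ext f
    simp only [mem_filter, mem_univ, true_and, Fintype.mem_piFinset]
    constructor
    · intro h c; split_ifs with hc; exacts [h c hc, mem_univ _]
    · intro h c hc; have := h c; rwa [if_pos hc] at this
  rw [h1, Fintype.card_piFinset, ← Finset.prod_mul_prod_compl P]
  congr 1
  · rw [Finset.prod_congr rfl (fun c hc => by rw [if_pos hc]),
      Finset.prod_const]
  · rw [Finset.prod_congr rfl (fun c hc => by rw [if_neg (by simpa using hc)]),
      Finset.prod_const, card_univ, Fintype.card_fin, card_compl]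

-- (c+1)^c ≥ 2 c^c for c ≥ 1, via P(n): c^n * (c+n) ≤ c * (c+1)^n
lemma aux_pow (c : ℕ) (hc : 1 ≤ c) : ∀ n : ℕ, c ^ n * (c + n) ≤ c * (c + 1) ^ n := by
  intro n
  induction n with
  | zero => simp
  | succ n ih =>
    have h2 : c * (c + 1) ^ (n + 1) = (c + 1) * (c * (c + 1) ^ n) := by ring
    calc c ^ (n + 1) * (c + n + 1) = c ^ n * (c * (c + n + 1)) := by ring
      _ ≤ c ^ n * ((c + 1) * (c + n)) := by
          apply Nat.mul_le_mul_left
          nlinarith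
      _ = (c + 1) * (c ^ n * (c + n)) := by ring
      _ ≤ (c + 1) * (c * (c + 1) ^ n) := Nat.mul_le_mul_left _ ih
      _ = c * (c + 1) ^ (n + 1) := by ring

lemma two_mul_pow_le (c : ℕ) (hc : 1 ≤ c) : 2 * c ^ c ≤ (c + 1) ^ c := by
  have := aux_pow c hc c
  have h2 : c ^ c * (c + c) = c * (2 * c ^ c) := by ring
  have h3 : c ^ c * (c + c) ≤ c * (c + 1) ^ c := this
  rw [h2] at h3
  exact Nat.le_of_mul_le_mul_left h3 (by omega)

lemma pow_boost {b m : ℕ} (hb : 2 ≤ b) : 2 ^ (m / (b - 1)) * (b - 1) ^ m ≤ b ^ m := by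
  obtain ⟨c, rfl⟩ : ∃ c, b = c + 1 := ⟨b - 1, by omega⟩
  have hc : 1 ≤ c := by omega
  simp only [Nat.add_sub_cancel]
  have hdm := Nat.div_add_mod m c
  set q := m / c with hqdef
  set r := m % c with hrdef
  have hm : m = c * q + r := by omega
  calc 2 ^ q * c ^ m = (2 * c ^ c) ^ q * c ^ r := by
        rw [hm, pow_add, pow_mul, mul_pow]; ring
    _ ≤ ((c + 1) ^ c) ^ q * (c + 1) ^ r :=
        Nat.mul_le_mul (Nat.pow_le_pow_left (two_mul_pow_le c hc) q)
          (Nat.pow_le_pow_left (by omega) r)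
    _ = (c + 1) ^ m := by rw [hm, pow_add, pow_mul]

end HG

namespace HG2
open HG

variable {M B ℓ : ℕ}

lemma nxt_cases (i : Fin ℓ) : (nxt i).1 = i.1 + 1 ∨ (i.1 + 1 = ℓ ∧ (nxt i).1 = 0) := by
  have hi := i.2
  rcases Nat.lt_or_ge (i.1 + 1) ℓ with h | h
  · left; exact Nat.mod_eq_of_lt h
  · right
    have he : i.1 + 1 = ℓ := by omega
    constructor
    · exact he
    · show (i.1 + 1) % ℓ = 0
      rw [he, Nat.mod_self]

lemma edge_inj (hl : 3 ≤ ℓ) {t : Fin ℓ → Fin M}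
    (ht : Function.Injective t) :
    Function.Injective (fun i : Fin ℓ => pairup (t i) (t (nxt i))) := by
  intro i j hij
  simp only at hij
  rcases pairup_eq hij with ⟨h1, h2⟩ | ⟨h1, h2⟩
  · exact ht h1
  · have v1 : i.1 = (nxt j).1 := congrArg Fin.val (ht h1)
    have v2 : (nxt i).1 = j.1 := congrArg Fin.val (ht h2)
    have hi2 := i.2; have hj2 := j.2
    exfalso
    rcases nxt_cases i with hi | hi <;> rcases nxt_cases j with hj | hj <;> omega

instance {f : Fin M × Fin M → Fin (B + 1)} : DecidableRel (graphOf f).Adj :=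
  fun x y => inferInstanceAs (Decidable (x ≠ y ∧ f (pairup x y) = 0))

instance {G : SimpleGraph (Fin M)} [DecidableRel G.Adj] :
    DecidablePred (IsCyc (ℓ := ℓ) G) :=
  fun t => inferInstanceAs (Decidable (Function.Injective t ∧ ∀ i, G.Adj (t i) (t (nxt i))))

def CT (G : SimpleGraph (Fin M)) [DecidableRel G.Adj] (ℓ : ℕ) : Finset (Fin ℓ → Fin M) :=
  univ.filter (fun t => IsCyc G t)

lemma cyc_event_card (hl3 : 3 ≤ ℓ) (hlM : ℓ ≤ M * M) (t : Fin ℓ → Fin M) :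
    (univ.filter (fun f : Fin M × Fin M → Fin (B + 1) => IsCyc (graphOf f) t)).card
      ≤ (B + 1) ^ (M * M - ℓ) := by
  by_cases ht : Function.Injective t
  · set P : Finset (Fin M × Fin M) := image (fun i => pairup (t i) (t (nxt i))) univ with hP
    have hsub : univ.filter (fun f : Fin M × Fin M → Fin (B + 1) => IsCyc (graphOf f) t)
        ⊆ univ.filter (fun f => ∀ c ∈ P, f c ∈ ({0} : Finset (Fin (B + 1)))) := by
      intro f hf
      simp only [mem_filter, mem_univ, true_and] at hf ⊢
      intro c hc
      obtain ⟨i, _, rfl⟩ := mem_image.1 hc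
      simpa using (hf.2 i).2
    have himg : P.card = ℓ := by
      rw [hP, Finset.card_image_of_injective _ (edge_inj hl3 ht), card_univ, Fintype.card_fin]
    have hcount : (univ.filter
        (fun f : Fin M × Fin M → Fin (B + 1) => ∀ c ∈ P, f c ∈ ({0} : Finset (Fin (B + 1))))).card
        = (B + 1) ^ (M * M - ℓ) := by
      rw [count_event, himg]
      simp [Fintype.card_prod]
    exact le_of_le_of_eq (Finset.card_le_card hsub) hcount
  · have hemp : univ.filter (fun f : Fin M × Fin M → Fin (B + 1) => IsCyc (graphOf f) t) = ∅ := by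
      apply Finset.filter_eq_empty_iff.2
      intro f _ hcyc
      exact ht hcyc.1
    simp [hemp]

lemma hole_event_card {s0 : ℕ} (hs : s0 * s0 ≤ M * M) (U1 U2 : Finset (Fin M))
    (hd : Disjoint U1 U2) (h1 : U1.card = s0) (h2 : U2.card = s0) :
    (univ.filter (fun f : Fin M × Fin M → Fin (B + 1) =>
        ∀ u ∈ U1, ∀ v ∈ U2, ¬ (graphOf f).Adj u v)).card
      ≤ B ^ (s0 * s0) * (B + 1) ^ (M * M - s0 * s0) := by
  set P : Finset (Fin M × Fin M) := image (fun p => pairup p.1 p.2) (U1 ×ˢ U2) with hP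
  have hPcard : P.card = s0 * s0 := by
    rw [hP, Finset.card_image_of_injOn, Finset.card_product, h1, h2]
    intro p hp q hq hpq
    simp only [Finset.mem_coe, Finset.mem_product] at hp hq
    rcases pairup_eq hpq with ⟨e1, e2⟩ | ⟨e1, e2⟩
    · exact Prod.ext e1 e2
    · exfalso
      exact Finset.disjoint_left.1 hd hp.1 (e1 ▸ hq.2)
  have hsub : univ.filter (fun f : Fin M × Fin M → Fin (B + 1) =>
        ∀ u ∈ U1, ∀ v ∈ U2, ¬ (graphOf f).Adj u v)
      ⊆ univ.filter (fun f => ∀ c ∈ P, f c ∈ ({0}ᶜ : Finset (Fin (B + 1)))) := by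
    intro f hf
    simp only [mem_filter, mem_univ, true_and] at hf ⊢
    intro c hc
    obtain ⟨p, hp, rfl⟩ := mem_image.1 hc
    simp only [Finset.mem_product] at hp
    have hne : p.1 ≠ p.2 := by
      intro h
      exact Finset.disjoint_left.1 hd hp.1 (h ▸ hp.2)
    have := hf p.1 hp.1 p.2 hp.2
    rw [graphOf_adj] at this
    simp only [Finset.mem_compl, Finset.mem_singleton]
    tauto
  have hcount : (univ.filter
      (fun f : Fin M × Fin M → Fin (B + 1) => ∀ c ∈ P, f c ∈ ({0}ᶜ : Finset (Fin (B + 1))))).card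
      = B ^ (s0 * s0) * (B + 1) ^ (M * M - s0 * s0) := by
    rw [count_event, hPcard]
    have : ({0}ᶜ : Finset (Fin (B + 1))).card = B := by
      rw [Finset.card_compl, Finset.card_singleton, Fintype.card_fin]; omega
    rw [this]
    simp [Fintype.card_prod]
  exact le_of_le_of_eq (Finset.card_le_card hsub) hcount

end HG2

namespace HG3
open HG HG2

variable {M B : ℕ}

lemma cycle_to_tuple {V : Type*} {G : SimpleGraph V} {v : V} {p : G.Walk v v}
    (hc : p.IsCycle) :
    ∃ t : Fin p.length → V, Function.Injective t ∧
      ∀ i, G.Adj (t i) (t (nxt i)) := by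
  have hlen : p.support.tail.length = p.length := by
    rw [List.length_tail, SimpleGraph.Walk.length_support]; omega
  have hpos : 0 < p.length := by have := hc.three_le_length; omega
  have hnd := hc.support_nodup
  have hchain : List.IsChain G.Adj (v :: p.support.tail) := by
    have h := p.isChain_adj_support
    rw [SimpleGraph.Walk.support_eq_cons] at h
    exact h
  have h0 : ∀ h : 0 < p.support.tail.length, G.Adj v (p.support.tail.get ⟨0, h⟩) := by
    intro h
    have := List.isChain_iff_getElem.1 hchain 0 (by simp only [List.length_cons]; omega)
    simpa using this
  have hstep : ∀ (i : ℕ) (h : i < p.support.tail.length - 1),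
      G.Adj (p.support.tail.get ⟨i, by omega⟩) (p.support.tail.get ⟨i + 1, by omega⟩) := by
    intro i h
    have := List.isChain_iff_getElem.1 hchain (i + 1) (by simp only [List.length_cons]; omega)
    simpa using this
  have hget : ∀ (i : ℕ) (h : i < p.support.tail.length),
      p.support.tail.getD i v = p.support.tail.get ⟨i, h⟩ := fun i h => (List.getD_eq_getElem _ _ h).trans rfl
  have h2 : p.support.tail ≠ [] := by
    intro h; rw [h] at hlen; simp at hlen; omega
  have h1 : p.support.tail.getLast h2 = v := by
    have ha := p.getLast_support
    have hb : p.support.getLast? = some v := by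
      rw [List.getLast?_eq_getLast_of_ne_nil (by simp), ha]
    have hc1 : p.support.getLast? = (v :: p.support.tail).getLast? := by
      rw [← SimpleGraph.Walk.support_eq_cons]
    have hd : (v :: p.support.tail).getLast? = p.support.tail.getLast? := by
      rcases htl : p.support.tail with _ | ⟨a, l'⟩
      · exact absurd htl h2
      · rw [List.getLast?_cons_cons]
    have he := List.getLast?_eq_getLast_of_ne_nil h2
    rw [hc1, hd, he] at hb
    exact Option.some.inj hb
  have hlast : p.support.tail.getD (p.length - 1) v = v := by
    have hidx2 : p.length - 1 = p.support.tail.length - 1 := by omega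
    rw [hidx2, List.getD_eq_getElem _ _ (by omega)]
    conv_rhs => rw [← h1]
    exact (List.getLast_eq_getElem h2).symm
  refine ⟨fun i => p.support.tail.getD i.1 v, ?_, ?_⟩
  · intro i j hij
    simp only at hij
    rw [hget i.1 (by omega), hget j.1 (by omega)] at hij
    have := List.nodup_iff_injective_get.1 hnd hij
    have hv : i.1 = j.1 := by simpa using this
    exact Fin.ext hv
  · intro i
    have hi2 := i.2
    simp only
    rcases nxt_cases i with hni | ⟨hi1, hni⟩
    · have hni2 := (nxt i).2
      rw [hni, hget i.1 (by omega), hget (i.1 + 1) (by omega)]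
      exact hstep i.1 (by omega)
    · have hiv : i.1 = p.length - 1 := by omega
      rw [hni, hiv, hlast, hget 0 (by omega)]
      exact h0 (by omega)

end HG3

namespace HG4
open HG HG2 HG3

lemma sum_CT_bound {M B k : ℕ} (hkM : k ≤ M * M) :
    ∑ f : Fin M × Fin M → Fin (B + 1), ∑ ℓ ∈ Finset.Icc 3 k, (CT (graphOf f) ℓ).card
      ≤ ∑ ℓ ∈ Finset.Icc 3 k, M ^ ℓ * (B + 1) ^ (M * M - ℓ) := by
  rw [Finset.sum_comm]
  apply Finset.sum_le_sum
  intro ℓ hℓ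
  obtain ⟨hℓ3, hℓk⟩ := Finset.mem_Icc.1 hℓ
  have hswap : ∑ f : Fin M × Fin M → Fin (B + 1), (CT (graphOf f) ℓ).card
      = ∑ t : Fin ℓ → Fin M,
          (univ.filter (fun f : Fin M × Fin M → Fin (B + 1) => IsCyc (graphOf f) t)).card := by
    simp only [CT, Finset.card_filter]
    exact Finset.sum_comm
  rw [hswap]
  calc ∑ t : Fin ℓ → Fin M,
        (univ.filter (fun f : Fin M × Fin M → Fin (B + 1) => IsCyc (graphOf f) t)).card
      ≤ ∑ _t : Fin ℓ → Fin M, (B + 1) ^ (M * M - ℓ) :=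
        Finset.sum_le_sum (fun t _ => cyc_event_card hℓ3 (le_trans hℓk hkM) t)
    _ = M ^ ℓ * (B + 1) ^ (M * M - ℓ) := by
        rw [Finset.sum_const, Finset.card_univ, Fintype.card_fun, Fintype.card_fin,
          Fintype.card_fin, smul_eq_mul]

set_option maxHeartbeats 1000000 in
lemma main (α : ℝ) (hα : 0 < α) (hα2 : α ≤ 1 / 2) (k : ℕ) (hk : 3 ≤ k) :
    ∃ N : ℕ, ∀ n : ℕ, N ≤ n →
      ∃ G : SimpleGraph (Fin n),
        (∀ (s : ℕ) (U₁ U₂ : Finset (Fin n)), Disjoint U₁ U₂ →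
          U₁.card = s → U₂.card = s →
          (∀ u ∈ U₁, ∀ v ∈ U₂, ¬ G.Adj u v) → (s : ℝ) < α * n) ∧
        (∀ (v : Fin n) (p : G.Walk v v), p.IsCycle → k < p.length) := by
  classical
  set c : ℕ := ⌈(4 : ℝ) / α ^ 2⌉₊ with hc
  have hc1 : 1 ≤ c := Nat.ceil_pos.2 (by positivity)
  have hcα : (4 : ℝ) ≤ α ^ 2 * c := by
    have h := Nat.le_ceil ((4 : ℝ) / α ^ 2)
    have hα2' : (0 : ℝ) < α ^ 2 := by positivity
    calc (4 : ℝ) = α ^ 2 * (4 / α ^ 2) := by field_simp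
      _ ≤ α ^ 2 * c := by exact mul_le_mul_of_nonneg_left h (le_of_lt hα2')
  set A : ℕ := 4 * c with hA
  set K : ℕ := k * A ^ k with hK
  set T : ℕ := 3 * K with hT
  have hK1 : 1 ≤ K := by
    have : 1 ≤ A ^ k := Nat.one_le_pow _ _ (by omega)
    calc 1 ≤ 1 * 1 := by omega
      _ ≤ k * A ^ k := Nat.mul_le_mul (by omega) this
  refine ⟨4 * c + k * T + k + 10, fun n hn => ?_⟩
  set B : ℕ := n / c - 1 with hB
  have hdm := Nat.div_add_mod n c
  have hmod : n % c < c := Nat.mod_lt n (by omega)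
  have hn4c : 4 * c ≤ n := by omega
  have hnc4 : 4 ≤ n / c := (Nat.le_div_iff_mul_le (by omega)).2 (by omega)
  have hB1 : B + 1 = n / c := by omega
  have hB3 : 3 ≤ B := by omega
  set M : ℕ := n + k * T with hM
  have hMpos : 0 < M := by omega
  have hkM : k ≤ M * M := by
    calc k ≤ M := by omega
      _ = M * 1 := by omega
      _ ≤ M * M := Nat.mul_le_mul_left M hMpos
  have hMle : M ≤ A * (B + 1) := by
    have hZ : A * (B + 1) = 4 * (c * (n / c)) := by rw [hB1, hA]; ring
    rw [hZ]
    omega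
  -- s0
  set s0 : ℕ := ⌈α * n⌉₊ with hs0
  have hs0n : s0 ≤ n := by
    rw [hs0]
    apply Nat.ceil_le.2
    have : α * n ≤ 1 * n := by
      apply mul_le_mul_of_nonneg_right _ (Nat.cast_nonneg n)
      linarith
    simpa using this
  have hs0pos : 1 ≤ s0 := by
    rw [hs0]
    apply Nat.ceil_pos.2
    have hn0 : (0 : ℝ) < n := by
      have : (10 : ℕ) ≤ n := by omega
      exact_mod_cast Nat.lt_of_lt_of_le (by norm_num) this
    positivity
  have hs0M : s0 * s0 ≤ M * M := Nat.mul_le_mul (by omega) (by omega)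
  -- the key density inequality
  have hq : 2 * M + 2 ≤ (s0 * s0) / B := by
    apply (Nat.le_div_iff_mul_le (by omega)).2
    have hreal : (((2 * M + 2) * B : ℕ) : ℝ) ≤ ((s0 * s0 : ℕ) : ℝ) := by
      push_cast
      have hc0 : (0 : ℝ) < c := by exact_mod_cast (by omega : 0 < c)
      rw [← mul_le_mul_iff_right₀ hc0]
      have h1 : ((B : ℝ) + 1) * c ≤ n := by
        have h1' : (B + 1) * c ≤ n := by
          rw [hB1]; exact Nat.div_mul_le_self n c
        exact_mod_cast h1'
      have h2 : α * n ≤ (s0 : ℝ) := Nat.le_ceil _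
      have h3 : (M : ℝ) = n + k * T := by push_cast [hM]; ring
      have h4 : (k * T : ℝ) + 1 ≤ n := by
        have : k * T + 1 ≤ n := by omega
        exact_mod_cast this
      have hn0 : (0 : ℝ) ≤ n := Nat.cast_nonneg n
      have hB0 : (0 : ℝ) ≤ B := Nat.cast_nonneg B
      have hBc : (B : ℝ) * c ≤ n := by nlinarith
      have hM4 : 2 * (M : ℝ) + 2 ≤ 4 * n := by rw [h3]; linarith
      have hL : (c : ℝ) * ((2 * M + 2) * B) ≤ 4 * n * n := by
        have hh := mul_le_mul hM4 hBc (by positivity) (by linarith)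
        nlinarith [hh]
      have hs0r : (0 : ℝ) ≤ α * n := by positivity
      have hR : 4 * n * n ≤ (c : ℝ) * (s0 * s0) := by
        have H1 : (α * n) * (α * n) ≤ (s0 : ℝ) * s0 := mul_le_mul h2 h2 hs0r (le_trans hs0r h2)
        have H3 := mul_le_mul_of_nonneg_left H1 (le_of_lt hc0)
        have H4 := mul_le_mul_of_nonneg_right hcα (mul_self_nonneg (n : ℝ))
        nlinarith [H3, H4]
      linarith
    exact_mod_cast hreal
  -- probability space counting
  set P : ℕ := (B + 1) ^ (M * M) with hP
  have hPpos : 0 < P := Nat.pow_pos (by omega)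
  have hcard_univ : (univ : Finset (Fin M × Fin M → Fin (B + 1))).card = P := by
    rw [Finset.card_univ, Fintype.card_fun]
    simp [hP, Fintype.card_prod]
  set Bad1 : Finset (Fin M × Fin M → Fin (B + 1)) :=
    univ.filter (fun f => ¬ (∑ ℓ ∈ Finset.Icc 3 k, (CT (graphOf f) ℓ).card ≤ T)) with hBad1
  set Bad2 : Finset (Fin M × Fin M → Fin (B + 1)) :=
    univ.filter (fun f => ¬ (∀ U1 U2 : Finset (Fin M), U1.card = s0 → U2.card = s0 →
      Disjoint U1 U2 → ∃ u ∈ U1, ∃ v ∈ U2, (graphOf f).Adj u v)) with hBad2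
  -- bound on Bad1
  have h3B1 : 3 * Bad1.card ≤ P := by
    have hsumtotal : ∑ f : Fin M × Fin M → Fin (B + 1),
        ∑ ℓ ∈ Finset.Icc 3 k, (CT (graphOf f) ℓ).card ≤ K * P := by
      refine le_trans (sum_CT_bound hkM) ?_
      have hterm : ∀ ℓ ∈ Finset.Icc 3 k,
          M ^ ℓ * (B + 1) ^ (M * M - ℓ) ≤ A ^ k * P := by
        intro ℓ hℓ
        obtain ⟨h3, hk'⟩ := Finset.mem_Icc.1 hℓ
        have hMA : M ^ ℓ ≤ (A * (B + 1)) ^ ℓ := Nat.pow_le_pow_left hMle ℓ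
        calc M ^ ℓ * (B + 1) ^ (M * M - ℓ)
            ≤ (A * (B + 1)) ^ ℓ * (B + 1) ^ (M * M - ℓ) := Nat.mul_le_mul_right _ hMA
          _ = A ^ ℓ * ((B + 1) ^ ℓ * (B + 1) ^ (M * M - ℓ)) := by rw [mul_pow]; ring
          _ = A ^ ℓ * P := by
              rw [← pow_add]
              congr 1
              · rw [hP]
                congr 1
                omega
          _ ≤ A ^ k * P := Nat.mul_le_mul_right _ (Nat.pow_le_pow_right (by omega) hk')
      calc ∑ ℓ ∈ Finset.Icc 3 k, M ^ ℓ * (B + 1) ^ (M * M - ℓ)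
          ≤ (Finset.Icc 3 k).card * (A ^ k * P) := Finset.sum_le_card_nsmul _ _ _ hterm
        _ ≤ k * (A ^ k * P) := by
            apply Nat.mul_le_mul_right
            rw [Nat.card_Icc]
            omega
        _ = K * P := by rw [hK]; ring
    have hmark : Bad1.card * (T + 1) ≤ K * P := by
      refine le_trans ?_ hsumtotal
      calc Bad1.card * (T + 1) = ∑ _f ∈ Bad1, (T + 1) := by
            rw [Finset.sum_const, smul_eq_mul]
        _ ≤ ∑ f ∈ Bad1, ∑ ℓ ∈ Finset.Icc 3 k, (CT (graphOf f) ℓ).card := by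
            apply Finset.sum_le_sum
            intro f hf
            have := (Finset.mem_filter.1 hf).2
            omega
        _ ≤ ∑ f : Fin M × Fin M → Fin (B + 1),
              ∑ ℓ ∈ Finset.Icc 3 k, (CT (graphOf f) ℓ).card :=
            Finset.sum_le_sum_of_subset (Finset.filter_subset _ _)
    have h1 : (3 * Bad1.card) * (T + 1) ≤ P * (T + 1) := by
      calc (3 * Bad1.card) * (T + 1) = 3 * (Bad1.card * (T + 1)) := by ring
        _ ≤ 3 * (K * P) := Nat.mul_le_mul_left _ hmark
        _ ≤ P * (T + 1) := by
            have : P * (T + 1) = 3 * (K * P) + P := by rw [hT]; ring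
            omega
    exact Nat.le_of_mul_le_mul_right h1 (by omega)
  -- bound on Bad2
  have h3B2 : 3 * Bad2.card ≤ P := by
    set Pairs : Finset (Finset (Fin M) × Finset (Fin M)) :=
      ((univ.powersetCard s0) ×ˢ (univ.powersetCard s0)).filter
        (fun pr => Disjoint pr.1 pr.2) with hPairs
    have hsub : Bad2 ⊆ Pairs.biUnion (fun pr => univ.filter
        (fun f : Fin M × Fin M → Fin (B + 1) =>
          ∀ u ∈ pr.1, ∀ v ∈ pr.2, ¬ (graphOf f).Adj u v)) := by
      intro f hf
      have hf2 := (Finset.mem_filter.1 hf).2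
      push_neg at hf2
      obtain ⟨U1, U2, hc1, hc2, hd, hno⟩ := hf2
      apply Finset.mem_biUnion.2
      refine ⟨(U1, U2), ?_, ?_⟩
      · rw [hPairs]
        apply Finset.mem_filter.2
        exact ⟨Finset.mem_product.2 ⟨Finset.mem_powersetCard.2 ⟨Finset.subset_univ _, hc1⟩,
          Finset.mem_powersetCard.2 ⟨Finset.subset_univ _, hc2⟩⟩, hd⟩
      · apply Finset.mem_filter.2
        refine ⟨Finset.mem_univ _, ?_⟩
        intro u hu v hv hadj
        exact hno u hu v hv hadj
    have hPairscard : Pairs.card ≤ 2 ^ M * 2 ^ M := by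
      calc Pairs.card ≤ ((univ.powersetCard s0) ×ˢ (univ.powersetCard s0)).card :=
            Finset.card_filter_le _ _
        _ = (univ.powersetCard s0).card * (univ.powersetCard s0).card := Finset.card_product _ _
        _ ≤ 2 ^ M * 2 ^ M := by
            apply Nat.mul_le_mul <;>
            · calc ((univ : Finset (Fin M)).powersetCard s0).card
                  ≤ (univ : Finset (Fin M)).powerset.card := by
                    apply Finset.card_le_card
                    rw [Finset.powersetCard_eq_filter]
                    exact Finset.filter_subset _ _
                _ = 2 ^ M := by rw [Finset.card_powerset, Finset.card_univ, Fintype.card_fin]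
    have hb2 : Bad2.card ≤ (2 ^ M * 2 ^ M) * (B ^ (s0 * s0) * (B + 1) ^ (M * M - s0 * s0)) := by
      calc Bad2.card ≤ (Pairs.biUnion (fun pr => univ.filter
          (fun f : Fin M × Fin M → Fin (B + 1) =>
            ∀ u ∈ pr.1, ∀ v ∈ pr.2, ¬ (graphOf f).Adj u v))).card := Finset.card_le_card hsub
        _ ≤ Pairs.card * (B ^ (s0 * s0) * (B + 1) ^ (M * M - s0 * s0)) := by
            apply Finset.card_biUnion_le_card_mul
            intro pr hpr
            rw [hPairs] at hpr
            have hpr' := Finset.mem_filter.1 hpr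
            have hmem := Finset.mem_product.1 hpr'.1
            exact hole_event_card hs0M pr.1 pr.2 hpr'.2
              (Finset.mem_powersetCard.1 hmem.1).2 (Finset.mem_powersetCard.1 hmem.2).2
        _ ≤ (2 ^ M * 2 ^ M) * (B ^ (s0 * s0) * (B + 1) ^ (M * M - s0 * s0)) :=
            Nat.mul_le_mul_right _ hPairscard
    have hkey : 3 * (2 ^ M * 2 ^ M) * B ^ (s0 * s0) ≤ (B + 1) ^ (s0 * s0) := by
      have hpb := pow_boost (b := B + 1) (m := s0 * s0) (by omega)
      simp only [Nat.add_sub_cancel] at hpb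
      have h2q : 3 * (2 ^ M * 2 ^ M) ≤ 2 ^ ((s0 * s0) / B) := by
        calc 3 * (2 ^ M * 2 ^ M) ≤ 4 * (2 ^ M * 2 ^ M) := by omega
          _ = 2 ^ (2 * M + 2) := by rw [pow_add, two_mul, pow_add]; ring
          _ ≤ 2 ^ ((s0 * s0) / B) := Nat.pow_le_pow_right (by omega) hq
      calc 3 * (2 ^ M * 2 ^ M) * B ^ (s0 * s0)
          ≤ 2 ^ ((s0 * s0) / B) * B ^ (s0 * s0) := Nat.mul_le_mul_right _ h2q
        _ ≤ (B + 1) ^ (s0 * s0) := hpb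
    calc 3 * Bad2.card ≤ 3 * ((2 ^ M * 2 ^ M) * (B ^ (s0 * s0) * (B + 1) ^ (M * M - s0 * s0))) :=
          Nat.mul_le_mul_left _ hb2
      _ = (3 * (2 ^ M * 2 ^ M) * B ^ (s0 * s0)) * (B + 1) ^ (M * M - s0 * s0) := by ring
      _ ≤ (B + 1) ^ (s0 * s0) * (B + 1) ^ (M * M - s0 * s0) := Nat.mul_le_mul_right _ hkey
      _ = P := by rw [← pow_add, hP]; congr 1; omega
  -- existence of a good f
  have hne : (univ \ (Bad1 ∪ Bad2)).Nonempty := by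
    rw [← Finset.card_pos, Finset.card_sdiff_of_subset (Finset.subset_univ _)]
    have hcup : (Bad1 ∪ Bad2).card ≤ Bad1.card + Bad2.card := Finset.card_union_le _ _
    rw [hcard_univ]
    omega
  obtain ⟨f, hf⟩ := hne
  rw [Finset.mem_sdiff, Finset.mem_union] at hf
  have hgood1 : ∑ ℓ ∈ Finset.Icc 3 k, (CT (graphOf f) ℓ).card ≤ T := by
    by_contra hcon
    exact hf.2 (Or.inl (Finset.mem_filter.2 ⟨Finset.mem_univ _, hcon⟩))
  have hgood2 : ∀ U1 U2 : Finset (Fin M), U1.card = s0 → U2.card = s0 →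
      Disjoint U1 U2 → ∃ u ∈ U1, ∃ v ∈ U2, (graphOf f).Adj u v := by
    by_contra hcon
    exact hf.2 (Or.inr (Finset.mem_filter.2 ⟨Finset.mem_univ _, hcon⟩))
  -- delete vertices on short cycles
  set D : Finset (Fin M) := (Finset.Icc 3 k).biUnion
    (fun ℓ => (CT (graphOf f) ℓ).biUnion (fun t => Finset.image t univ)) with hD
  have hDcard : D.card ≤ k * T := by
    calc D.card ≤ ∑ ℓ ∈ Finset.Icc 3 k,
          ((CT (graphOf f) ℓ).biUnion (fun t => Finset.image t univ)).card :=
          Finset.card_biUnion_le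
      _ ≤ ∑ ℓ ∈ Finset.Icc 3 k, (CT (graphOf f) ℓ).card * k := by
          apply Finset.sum_le_sum
          intro ℓ hℓ
          calc ((CT (graphOf f) ℓ).biUnion (fun t => Finset.image t univ)).card
              ≤ ∑ t ∈ CT (graphOf f) ℓ, (Finset.image t univ).card := Finset.card_biUnion_le
            _ ≤ ∑ _t ∈ CT (graphOf f) ℓ, k := by
                apply Finset.sum_le_sum
                intro t _
                calc (Finset.image t univ).card ≤ (univ : Finset (Fin ℓ)).card :=
                      Finset.card_image_le
                  _ = ℓ := by rw [Finset.card_univ, Fintype.card_fin]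
                  _ ≤ k := (Finset.mem_Icc.1 hℓ).2
            _ = (CT (graphOf f) ℓ).card * k := by rw [Finset.sum_const, smul_eq_mul]
      _ = (∑ ℓ ∈ Finset.Icc 3 k, (CT (graphOf f) ℓ).card) * k := by rw [Finset.sum_mul]
      _ ≤ T * k := Nat.mul_le_mul_right _ hgood1
      _ = k * T := by ring
  have hDc : n ≤ (Dᶜ : Finset (Fin M)).card := by
    rw [Finset.card_compl, Fintype.card_fin]
    omega
  set e := Finset.orderEmbOfCardLe (Dᶜ : Finset (Fin M)) hDc with he
  have hemem : ∀ a, e a ∈ (Dᶜ : Finset (Fin M)) :=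
    fun a => Finset.orderEmbOfCardLe_mem _ hDc a
  refine ⟨⟨fun a b => (graphOf f).Adj (e a) (e b), ?_, ?_⟩, ?_, ?_⟩
  · refine ⟨?_⟩
    intro a b h
    exact (graphOf f).symm.symm _ _ h
  · refine ⟨?_⟩
    intro a h
    exact (graphOf f).loopless.irrefl _ h
  · -- bipartite hole property
    intro s U1 U2 hd hc1 hc2 hno
    by_contra hcon
    push_neg at hcon
    have hs0s : s0 ≤ s := Nat.ceil_le.2 hcon
    obtain ⟨W1, hW1sub, hW1card⟩ := Finset.exists_subset_card_eq (show s0 ≤ U1.card by omega)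
    obtain ⟨W2, hW2sub, hW2card⟩ := Finset.exists_subset_card_eq (show s0 ≤ U2.card by omega)
    have himg1 : (W1.image e).card = s0 := by
      rw [Finset.card_image_of_injective _ e.injective, hW1card]
    have himg2 : (W2.image e).card = s0 := by
      rw [Finset.card_image_of_injective _ e.injective, hW2card]
    have hdisj : Disjoint (W1.image e) (W2.image e) := by
      rw [Finset.disjoint_image e.injective]
      exact Finset.disjoint_of_subset_left hW1sub (Finset.disjoint_of_subset_right hW2sub hd)
    obtain ⟨u, hu, v, hv, hadj⟩ := hgood2 _ _ himg1 himg2 hdisj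
    obtain ⟨a, ha, rfl⟩ := Finset.mem_image.1 hu
    obtain ⟨b, hb, rfl⟩ := Finset.mem_image.1 hv
    exact hno a (hW1sub ha) b (hW2sub hb) hadj
  · -- girth property
    intro v p hcyc
    by_contra hnk
    push_neg at hnk
    obtain ⟨t0, ht0i, ht0a⟩ := cycle_to_tuple hcyc
    have hl3 := hcyc.three_le_length
    set t : Fin p.length → Fin M := fun i => e (t0 i) with ht
    have htmem : t ∈ CT (graphOf f) p.length := by
      apply Finset.mem_filter.2
      refine ⟨Finset.mem_univ _, ?_, ?_⟩
      · intro i j hij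
        exact ht0i (e.injective hij)
      · intro i
        exact ht0a i
    have hpos : (0 : ℕ) < p.length := by omega
    have htD : t ⟨0, hpos⟩ ∈ D := by
      rw [hD]
      apply Finset.mem_biUnion.2
      refine ⟨p.length, Finset.mem_Icc.2 ⟨hl3, hnk⟩, ?_⟩
      apply Finset.mem_biUnion.2
      exact ⟨t, htmem, Finset.mem_image.2 ⟨⟨0, hpos⟩, Finset.mem_univ _, rfl⟩⟩
    have := hemem (t0 ⟨0, hpos⟩)
    rw [Finset.mem_compl] at this
    exact this (by rw [ht] at htD; exact htD)

end HG4

open RTT in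
/-- For any `α > 0` and `k ≥ 3`, for all sufficiently large `n` there is an
`n`-vertex graph `G` with `α*(G) < αn` and girth greater than `k` (no cycle of length
at most `k`). -/
theorem high_girth_small_bipartite_holes :
    ∀ α : ℝ, 0 < α → ∀ k : ℕ, 3 ≤ k →
    ∃ N : ℕ, ∀ n : ℕ, N ≤ n →
      ∃ G : SimpleGraph (Fin n),
        (∀ (s : ℕ) (U₁ U₂ : Finset (Fin n)), Disjoint U₁ U₂ →
          U₁.card = s → U₂.card = s →
          (∀ u ∈ U₁, ∀ v ∈ U₂, ¬ G.Adj u v) → (s : ℝ) < α * n) ∧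
        (∀ (v : Fin n) (p : G.Walk v v), p.IsCycle → k < p.length) := by
  intro α hα k hk
  obtain ⟨N, hN⟩ := HG4.main (min α (1 / 2)) (lt_min hα (by norm_num)) (min_le_right _ _) k hk
  refine ⟨N, fun n hn => ?_⟩
  obtain ⟨G, h1, h2⟩ := hN n hn
  refine ⟨G, fun s U1 U2 hd hc1 hc2 hno => ?_, h2⟩
  exact lt_of_lt_of_le (h1 s U1 U2 hd hc1 hc2 hno)
    (mul_le_mul_of_nonneg_right (min_le_left _ _) (Nat.cast_nonneg n))
end
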